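/- arXiv:1910.02418 — 8 statements merged into one kernel-verified Lean document; each statement's English description precedes it below -/
import Mathlib

section
/- For every integer n ≥ 1, the number f(n) of relatively prime subsets of {1, 2, ..., n} satisfies 2^n − 2^⌊n/2⌋ − n·2^⌊n/3⌋ ≤ f(n) ≤ 2^n − 2^⌊n/2⌋. -/
/-- `f n` is the number of relatively prime subsets of `{1, 2, ..., n}`,
i.e. subsets `A` with `gcd A = 1` (such subsets are automatically nonempty). -/
def f (n : ℕ) : ℕ :=
  ((Finset.Icc 1 n).powerset.filter (fun A => A.gcd id = 1)).card

open Finset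

lemma card_mult (n d : ℕ) : ((Icc 1 n).filter (fun x => d ∣ x)).card = n / d := by
  have h : Icc 1 n = Ioc 0 n := by rw [← Finset.Icc_add_one_left_eq_Ioc]; rfl
  rw [h]
  exact Nat.Ioc_filter_dvd_card_eq_div n d

theorem stmt_0 (n : ℕ) (hn : 1 ≤ n) :
    (2 : ℤ) ^ n - 2 ^ (n / 2) - n * 2 ^ (n / 3) ≤ (f n : ℤ) ∧
      (f n : ℤ) ≤ 2 ^ n - 2 ^ (n / 2) := by
  classical
  set B := ((Finset.Icc 1 n).powerset).filter (fun A => ¬ A.gcd id = 1) with hB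
  have hsplit : f n + B.card = 2 ^ n := by
    rw [f, hB, Finset.card_filter_add_card_filter_not,
      Finset.card_powerset, Nat.card_Icc]
    simp
  -- lower bound on B.card
  have hup : 2 ^ (n / 2) ≤ B.card := by
    have hsub : ((Icc 1 n).filter (fun x => 2 ∣ x)).powerset ⊆ B := by
      intro A hA
      rw [mem_powerset] at hA
      refine mem_filter.mpr ⟨mem_powerset.mpr (hA.trans (filter_subset _ _)), ?_⟩
      intro h
      have h2 : 2 ∣ A.gcd id := Finset.dvd_gcd fun b hb => (mem_filter.mp (hA hb)).2
      rw [h] at h2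
      norm_num at h2
    calc 2 ^ (n / 2) = ((Icc 1 n).filter (fun x => 2 ∣ x)).powerset.card := by
          rw [card_powerset, card_mult]
      _ ≤ B.card := card_le_card hsub
  -- upper bound on B.card
  have hlow : B.card ≤ 2 ^ (n / 2) + n * 2 ^ (n / 3) := by
    have hsub : B ⊆ insert ∅ ((Icc 2 n).biUnion
        (fun d => ((Icc 1 n).filter (fun x => d ∣ x)).powerset)) := by
      intro A hA
      obtain ⟨hAs, hAg⟩ := mem_filter.mp hA
      rw [mem_powerset] at hAs
      rcases eq_or_ne A ∅ with rfl | hne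
      · exact mem_insert_self _ _
      · refine mem_insert_of_mem (mem_biUnion.mpr ⟨A.gcd id, ?_, ?_⟩)
        · obtain ⟨a, ha⟩ := Finset.nonempty_iff_ne_empty.mpr hne
          have hga : A.gcd id ∣ a := Finset.gcd_dvd ha
          have ha' := mem_Icc.mp (hAs ha)
          have hle : A.gcd id ≤ a := Nat.le_of_dvd ha'.1 hga
          have hg2 : 2 ≤ A.gcd id := by
            have h0 : A.gcd id ≠ 0 := by
              intro h0
              rw [h0, zero_dvd_iff] at hga
              omega
            omega
          exact mem_Icc.mpr ⟨hg2, hle.trans ha'.2⟩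
        · exact mem_powerset.mpr fun x hx =>
            mem_filter.mpr ⟨hAs hx, Finset.gcd_dvd hx⟩
    have hbi : ((Icc 2 n).biUnion
        (fun d => ((Icc 1 n).filter (fun x => d ∣ x)).powerset)).card
        ≤ ∑ d ∈ Icc 2 n, 2 ^ (n / d) := by
      refine (Finset.card_biUnion_le).trans ?_
      refine Finset.sum_le_sum fun d _ => ?_
      rw [card_powerset, card_mult]
    have hsum : ∑ d ∈ Icc 2 n, 2 ^ (n / d) ≤ 2 ^ (n / 2) + (n - 2) * 2 ^ (n / 3) := by
      rcases Nat.lt_or_ge n 2 with h2 | h2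
      · have : Icc 2 n = ∅ := Icc_eq_empty (by omega)
        simp [this]
      · have hins : Icc 2 n = insert 2 (Icc 3 n) := by
          rw [← Finset.insert_Icc_add_one_left_eq_Icc h2]; rfl
        rw [hins, Finset.sum_insert (by simp)]
        have : ∑ d ∈ Icc 3 n, 2 ^ (n / d) ≤ ∑ _d ∈ Icc 3 n, 2 ^ (n / 3) := by
          refine Finset.sum_le_sum fun d hd => ?_
          exact Nat.pow_le_pow_right (by norm_num)
            (Nat.div_le_div_left (mem_Icc.mp hd).1 (by norm_num))
        rw [Finset.sum_const, Nat.card_Icc, smul_eq_mul] at this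
        have hcard : n + 1 - 3 = n - 2 := by omega
        rw [hcard] at this
        exact Nat.add_le_add_left this _
    have hone : 1 + (n - 2) * 2 ^ (n / 3) ≤ n * 2 ^ (n / 3) := by
      have h1 : 1 ≤ 2 ^ (n / 3) := Nat.one_le_two_pow
      rcases Nat.lt_or_ge n 2 with h2 | h2
      · have : n - 2 = 0 := by omega
        rw [this, Nat.zero_mul, Nat.add_zero]; exact le_trans hn (Nat.le_mul_of_pos_right n h1)
      · calc 1 + (n - 2) * 2 ^ (n / 3) ≤ 2 * 2 ^ (n / 3) + (n - 2) * 2 ^ (n / 3) := by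
              omega
          _ = n * 2 ^ (n / 3) := by
              rw [← Nat.add_mul]; congr 1; omega
    calc B.card ≤ (insert ∅ ((Icc 2 n).biUnion
          (fun d => ((Icc 1 n).filter (fun x => d ∣ x)).powerset))).card :=
          card_le_card hsub
      _ ≤ 1 + ∑ d ∈ Icc 2 n, 2 ^ (n / d) := by
          refine (card_insert_le _ _).trans ?_
          omega
      _ ≤ 1 + (2 ^ (n / 2) + (n - 2) * 2 ^ (n / 3)) := by omega
      _ ≤ 2 ^ (n / 2) + n * 2 ^ (n / 3) := by omega
  constructor
  · have := hsplit
    zify at this hlow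
    linarith
  · have := hsplit
    zify at this hup
    linarith
end

section
/- For every integer n ≥ 1, f(n) = Σ_{d=1}^{n} μ(d)·(2^⌊n/d⌋ − 1), where μ is the Möbius function. -/
open Finset ArithmeticFunction ArithmeticFunction.Moebius in
lemma sum_moebius_divisors_aux (k : ℕ) :
    ∑ d ∈ k.divisors, (μ d : ℤ) = if k = 1 then 1 else 0 := by
  have := congrArg (fun g : ArithmeticFunction ℤ => g k) moebius_mul_coe_zeta
  simp only [coe_mul_zeta_apply, one_apply] at this
  exact this

open Finset ArithmeticFunction ArithmeticFunction.Moebius in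
lemma card_dvd_subsets (n d : ℕ) :
    ((Finset.Icc 1 n).powerset.filter
        (fun A => d ∈ (A.gcd _root_.id).divisors)).card = 2 ^ (n / d) - 1 := by
  classical
  set M : Finset ℕ := (Finset.Icc 1 n).filter (fun a => d ∣ a) with hM
  have hcardM : M.card = n / d := by
    rw [hM, show Finset.Icc 1 n = Finset.Ioc 0 n from (Finset.Icc_add_one_left_eq_Ioc 0 n)]
    exact Nat.Ioc_filter_dvd_card_eq_div n d
  have hset : (Finset.Icc 1 n).powerset.filter (fun A => d ∈ (A.gcd _root_.id).divisors)
      = M.powerset.erase ∅ := by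
    ext A
    simp only [mem_filter, mem_powerset, Nat.mem_divisors, mem_erase, hM]
    constructor
    · rintro ⟨hA, hdvd, hne⟩
      refine ⟨?_, fun a ha => mem_filter.mpr ⟨hA ha, dvd_trans hdvd (Finset.gcd_dvd ha)⟩⟩
      rintro rfl
      simp at hne
    · rintro ⟨hne, hA⟩
      refine ⟨fun a ha => (mem_filter.mp (hA ha)).1,
        Finset.dvd_gcd (fun a ha => (mem_filter.mp (hA ha)).2), ?_⟩
      intro h0
      obtain ⟨a, ha⟩ := Finset.nonempty_iff_ne_empty.mpr hne
      have : a = 0 := by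
        have := Finset.gcd_eq_zero_iff.mp h0 a ha
        simpa using this
      have := (Finset.mem_Icc.mp ((mem_filter.mp (hA ha)).1)).1
      omega
  rw [hset, Finset.card_erase_of_mem (Finset.empty_mem_powerset M),
    Finset.card_powerset, hcardM]

open ArithmeticFunction ArithmeticFunction.Moebius in
theorem stmt_1 (n : ℕ) (hn : 1 ≤ n) :
    (f n : ℤ) = ∑ d ∈ Finset.Icc 1 n, (μ d : ℤ) * (2 ^ (n / d) - 1) := by
  classical
  have step1 : (f n : ℤ) = ∑ A ∈ (Finset.Icc 1 n).powerset,
      (if A.gcd _root_.id = 1 then (1 : ℤ) else 0) := by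
    rw [f, Finset.card_filter]
    push_cast [apply_ite (Nat.cast : ℕ → ℤ)]
    rfl
  have hdivs : ∀ A ∈ (Finset.Icc 1 n).powerset, (A.gcd _root_.id).divisors ⊆ Finset.Icc 1 n := by
    intro A hA
    intro e he
    obtain ⟨hdvd, hne⟩ := Nat.mem_divisors.mp he
    have hAne : A.Nonempty := by
      rw [Finset.nonempty_iff_ne_empty]
      rintro rfl
      simp at hne
    obtain ⟨a, ha⟩ := hAne
    have haI := Finset.mem_Icc.mp ((Finset.mem_powerset.mp hA) ha)
    have hga : A.gcd _root_.id ∣ a := Finset.gcd_dvd ha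
    have hgle : A.gcd _root_.id ≤ a := Nat.le_of_dvd (by omega) hga
    have hele : e ≤ A.gcd _root_.id := Nat.le_of_dvd (Nat.pos_of_ne_zero hne) hdvd
    have hepos : 0 < e := Nat.pos_of_dvd_of_pos hdvd (Nat.pos_of_ne_zero hne)
    exact Finset.mem_Icc.mpr ⟨hepos, le_trans hele (le_trans hgle haI.2)⟩
  have step2 : (f n : ℤ) = ∑ A ∈ (Finset.Icc 1 n).powerset,
      ∑ d ∈ Finset.Icc 1 n, (if d ∈ (A.gcd _root_.id).divisors then (μ d : ℤ) else 0) := by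
    rw [step1]
    refine Finset.sum_congr rfl fun A hA => ?_
    rw [Finset.sum_ite_mem, Finset.inter_eq_right.mpr (hdivs A hA),
      sum_moebius_divisors_aux]
  rw [step2, Finset.sum_comm]
  refine Finset.sum_congr rfl fun d hd => ?_
  rw [Finset.sum_ite, Finset.sum_const_zero, add_zero, Finset.sum_const, nsmul_eq_mul,
    card_dvd_subsets n d, mul_comm]
  congr 1
  have h1 : 1 ≤ 2 ^ (n / d) := Nat.one_le_two_pow
  push_cast [h1]
  ring
end

section
/- For every integer n ≥ 1, g(n) = Σ f(⌊n/d⌋), where the sum is over all integers d with 2 ≤ d ≤ n and gcd(d, n+1) = 1. -/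
/-- `g n` is the number of nonempty subsets `A` of `{1, 2, ..., n}` with
`gcd A > 1` and `gcd (gcd A) (n+1) = 1`. -/
def g (n : ℕ) : ℕ :=
  ((Finset.Icc 1 n).powerset.filter
    (fun A => 1 < A.gcd id ∧ Nat.gcd (A.gcd id) (n + 1) = 1)).card

lemma card_gcd_eq (n d : ℕ) (hd : 2 ≤ d) :
    ((Finset.Icc 1 n).powerset.filter (fun A => A.gcd id = d)).card = f (n / d) := by
  have hd0 : 0 < d := by omega
  unfold f
  refine Finset.card_bij' (fun A _ => A.image (· / d)) (fun B _ => B.image (· * d)) ?_ ?_ ?_ ?_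
  · -- i maps into target
    intro A hA
    simp only [Finset.mem_filter, Finset.mem_powerset] at hA ⊢
    obtain ⟨hsub, hgcd⟩ := hA
    have hdvd : ∀ a ∈ A, d ∣ a := fun a ha => hgcd ▸ Finset.gcd_dvd ha
    constructor
    · intro x hx
      simp only [Finset.mem_image] at hx
      obtain ⟨a, ha, rfl⟩ := hx
      have := hsub ha
      simp only [Finset.mem_Icc] at this ⊢
      obtain ⟨c, rfl⟩ := hdvd a ha
      rw [Nat.mul_div_cancel_left _ hd0]
      constructor
      · rcases Nat.eq_zero_or_pos c with h | h
        · subst h; omega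
        · exact h
      · calc c ≤ d * c / d := by rw [Nat.mul_div_cancel_left _ hd0]
          _ ≤ n / d := Nat.div_le_div_right this.2
    · rw [Finset.gcd_image]
      have : A.gcd (id ∘ (· / d)) * d = d := by
        have h1 : A.gcd (fun a => (a / d) * d) = A.gcd (id ∘ (· / d)) * d := by
          simpa using (Finset.gcd_mul_right (s := A) (f := fun a => a / d) (a := d))
        have h2 : A.gcd (fun a => (a / d) * d) = A.gcd id := by
          apply Finset.gcd_congr rfl
          intro a ha
          exact Nat.div_mul_cancel (hdvd a ha)
        rw [← h1, h2, hgcd]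
      have h3 : A.gcd (id ∘ (· / d)) * d = 1 * d := by rw [this, one_mul]
      exact Nat.eq_of_mul_eq_mul_right hd0 h3
  · -- j maps into source
    intro B hB
    simp only [Finset.mem_filter, Finset.mem_powerset] at hB ⊢
    obtain ⟨hsub, hgcd⟩ := hB
    constructor
    · intro x hx
      simp only [Finset.mem_image] at hx
      obtain ⟨b, hb, rfl⟩ := hx
      have := hsub hb
      simp only [Finset.mem_Icc] at this ⊢
      constructor
      · exact Nat.one_le_iff_ne_zero.2 (Nat.mul_ne_zero (by omega) (by omega))
      · exact (Nat.le_div_iff_mul_le hd0).1 this.2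
    · rw [Finset.gcd_image]
      have : B.gcd (id ∘ (· * d)) = B.gcd id * d := by
        simpa using (Finset.gcd_mul_right (s := B) (f := id) (a := d))
      rw [this, hgcd, one_mul]
  · -- left inverse
    intro A hA
    simp only [Finset.mem_filter, Finset.mem_powerset] at hA
    obtain ⟨hsub, hgcd⟩ := hA
    have hdvd : ∀ a ∈ A, d ∣ a := fun a ha => hgcd ▸ Finset.gcd_dvd ha
    show Finset.image (fun x => x * d) (Finset.image (fun x => x / d) A) = A
    rw [Finset.image_image]
    rw [show A = A.image id from (Finset.image_id).symm]
    rw [Finset.image_image]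
    apply Finset.image_congr
    intro a ha
    simp only [Function.comp_apply, id]
    exact Nat.div_mul_cancel (hdvd a ha)
  · -- right inverse
    intro B hB
    show Finset.image (fun x => x / d) (Finset.image (fun x => x * d) B) = B
    rw [Finset.image_image]
    rw [show B = B.image id from (Finset.image_id).symm]
    rw [Finset.image_image]
    apply Finset.image_congr
    intro b hb
    simp [Nat.mul_div_cancel _ hd0]

theorem stmt_2 (n : ℕ) (hn : 1 ≤ n) :
    g n = ∑ d ∈ (Finset.Icc 2 n).filter (fun d => Nat.gcd d (n + 1) = 1),
      f (n / d) := by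
  unfold g
  have hset : ((Finset.Icc 1 n).powerset.filter
      (fun A => 1 < A.gcd id ∧ Nat.gcd (A.gcd id) (n + 1) = 1)) =
      ((Finset.Icc 2 n).filter (fun d => Nat.gcd d (n + 1) = 1)).biUnion
        (fun d => (Finset.Icc 1 n).powerset.filter (fun A => A.gcd id = d)) := by
    ext A
    simp only [Finset.mem_filter, Finset.mem_powerset, Finset.mem_biUnion, Finset.mem_Icc]
    constructor
    · rintro ⟨hsub, hgt, hcop⟩
      refine ⟨A.gcd id, ⟨⟨hgt, ?_⟩, hcop⟩, hsub, rfl⟩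
      have hne : A.Nonempty := by
        by_contra h
        rw [Finset.not_nonempty_iff_eq_empty] at h
        subst h
        simp [Finset.gcd_empty] at hgt
      obtain ⟨a, ha⟩ := hne
      have h1 := Finset.gcd_dvd (f := id) ha
      have h2 := hsub ha
      simp only [Finset.mem_Icc, id] at h2 h1
      exact le_trans (Nat.le_of_dvd (by omega) h1) h2.2
    · rintro ⟨d, ⟨⟨hd2, hdn⟩, hcop⟩, hsub, rfl⟩
      exact ⟨hsub, by omega, hcop⟩
  rw [hset, Finset.card_biUnion]
  · apply Finset.sum_congr rfl
    intro d hd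
    simp only [Finset.mem_filter, Finset.mem_Icc] at hd
    exact card_gcd_eq n d hd.1.1
  · intro x hx y hy hxy
    apply Finset.disjoint_left.2
    intro A hAx hAy
    simp only [Finset.mem_filter] at hAx hAy
    exact hxy (hAx.2 ▸ hAy.2)
end

section
/- For every integer n ≥ 51, f(n)² − f(n−2)·f(n+2) > 0. -/
open Finset

lemma f_add_le (m : ℕ) : f m + 2 ^ (m / 2) ≤ 2 ^ m := by
  classical
  set S := (Finset.Icc 1 (m / 2)).image (fun i => 2 * i) with hSdef
  have hS : S ⊆ Finset.Icc 1 m := by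
    intro x hx
    simp only [hSdef, mem_image, mem_Icc] at hx ⊢
    obtain ⟨i, ⟨h1, h2⟩, rfl⟩ := hx
    omega
  have hcardS : S.card = m / 2 := by
    rw [hSdef, card_image_of_injective _ (fun a b h => by omega), Nat.card_Icc]
    omega
  have hdisj : Disjoint ((Finset.Icc 1 m).powerset.filter (fun A => A.gcd id = 1))
      S.powerset := by
    rw [Finset.disjoint_left]
    intro A hA hA'
    simp only [mem_filter, mem_powerset] at hA hA'
    rcases A.eq_empty_or_nonempty with rfl | ⟨a, ha⟩
    · simp [Finset.gcd_empty] at hA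
    · have h2 : (2 : ℕ) ∣ A.gcd id := by
        apply Finset.dvd_gcd
        intro b hb
        have := hA' hb
        simp only [hSdef, mem_image] at this
        obtain ⟨i, _, rfl⟩ := this
        exact ⟨i, rfl⟩
      rw [hA.2] at h2
      omega
  have hsub : (Finset.Icc 1 m).powerset.filter (fun A => A.gcd id = 1) ∪ S.powerset
      ⊆ (Finset.Icc 1 m).powerset := by
    intro A hA
    rcases mem_union.mp hA with h | h
    · exact (mem_filter.mp h).1
    · exact mem_powerset.mpr ((mem_powerset.mp h).trans hS)
  have := Finset.card_le_card hsub
  rw [Finset.card_union_of_disjoint hdisj, card_powerset, hcardS, card_powerset,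
    Nat.card_Icc] at this
  simpa [f] using this

lemma le_f_add (m : ℕ) :
    2 ^ m ≤ f m + (1 + ∑ d ∈ Finset.Icc 2 m, 2 ^ (m / d)) := by
  classical
  have hsplit : f m + ((Finset.Icc 1 m).powerset.filter (fun A => ¬ A.gcd id = 1)).card
      = 2 ^ m := by
    rw [f, Finset.card_filter_add_card_filter_not, card_powerset, Nat.card_Icc]
    simp
  have hcover : (Finset.Icc 1 m).powerset.filter (fun A => ¬ A.gcd id = 1)
      ⊆ insert (∅ : Finset ℕ)
        ((Finset.Icc 2 m).biUnion (fun d => ((Finset.Icc 1 m).filter (d ∣ ·)).powerset)) := by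
    intro A hA
    simp only [mem_filter, mem_powerset] at hA
    obtain ⟨hAsub, hAgcd⟩ := hA
    rcases A.eq_empty_or_nonempty with rfl | ⟨a, ha⟩
    · exact mem_insert_self _ _
    · apply mem_insert_of_mem
      rw [mem_biUnion]
      refine ⟨A.gcd id, ?_, ?_⟩
      · have h1 : A.gcd id ∣ a := Finset.gcd_dvd ha
        have ha' := hAsub ha
        rw [mem_Icc] at ha'
        have h2 : A.gcd id ≤ a := Nat.le_of_dvd (by omega) h1
        have h3 : A.gcd id ≠ 0 := by
          intro h
          rw [h] at h1
          omega
        rw [mem_Icc]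
        omega
      · rw [mem_powerset]
        intro b hb
        rw [mem_filter]
        exact ⟨hAsub hb, Finset.gcd_dvd hb⟩
  have hcard := Finset.card_le_card hcover
  have hbound : (insert (∅ : Finset ℕ)
      ((Finset.Icc 2 m).biUnion (fun d => ((Finset.Icc 1 m).filter (d ∣ ·)).powerset))).card
      ≤ 1 + ∑ d ∈ Finset.Icc 2 m, 2 ^ (m / d) := by
    refine (Finset.card_insert_le _ _).trans ?_
    have h1 : ((Finset.Icc 2 m).biUnion
        (fun d => ((Finset.Icc 1 m).filter (d ∣ ·)).powerset)).card
        ≤ ∑ d ∈ Finset.Icc 2 m, 2 ^ (m / d) := by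
      refine (Finset.card_biUnion_le).trans ?_
      apply Finset.sum_le_sum
      intro d _
      rw [card_powerset]
      apply Nat.pow_le_pow_right (by norm_num)
      have : Finset.Icc 1 m = Finset.Ioc 0 m := by
        ext x; simp [Nat.lt_iff_add_one_le]
      rw [this, Nat.Ioc_filter_dvd_card_eq_div]
    omega
  omega

lemma pow_help (m : ℕ) (hm : 12 ≤ m) : 64 * (m + 1) ≤ 2 ^ m := by
  induction m, hm using Nat.le_induction with
  | base => norm_num
  | succ m hm ih =>
    have : (64 : ℕ) ≤ 2 ^ m := le_trans (by norm_num) (Nat.pow_le_pow_right (by norm_num) hm)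
    calc 64 * (m + 1 + 1) = 64 * (m + 1) + 64 := by ring
    _ ≤ 2 ^ m + 2 ^ m := by omega
    _ = 2 ^ (m + 1) := by rw [pow_succ]; ring

lemma sum_bound (m : ℕ) (hm : 51 ≤ m) :
    1 + ∑ d ∈ Finset.Icc 2 m, 2 ^ (m / d) ≤ 2 ^ (m / 2) + 2 ^ (m / 2 - 3) := by
  have h23 : Finset.Icc 2 m = insert 2 (insert 3 (Finset.Icc 4 m)) := by
    ext x; simp [mem_Icc, mem_insert]; omega
  have hsum4 : ∑ d ∈ Finset.Icc 4 m, 2 ^ (m / d) ≤ (m - 3) * 2 ^ (m / 4) := by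
    have := Finset.sum_le_card_nsmul (Finset.Icc 4 m) (fun d => 2 ^ (m / d)) (2 ^ (m / 4))
      (fun x hx => by
        apply Nat.pow_le_pow_right (by norm_num)
        rw [mem_Icc] at hx
        exact Nat.div_le_div_left hx.1 (by norm_num))
    rw [Nat.card_Icc] at this
    simpa [smul_eq_mul] using this
  rw [h23, Finset.sum_insert (by simp [mem_Icc]), Finset.sum_insert (by simp [mem_Icc])]
  -- Now: 1 + (2^(m/2) + (2^(m/3) + ∑_{Icc 4 m})) ≤ 2^(m/2) + 2^(m/2-3)
  have key : 1 + 2 ^ (m / 3) + (m - 3) * 2 ^ (m / 4) ≤ 2 ^ (m / 2 - 3) := by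
    have h1 : 2 ^ (m / 3) ≤ 2 ^ (m / 2 - 5) :=
      Nat.pow_le_pow_right (by norm_num) (by omega)
    have hm4 : m ≤ 2 ^ (m / 4 - 4) := by
      have := pow_help (m / 4) (by omega)
      have h2 : 2 ^ (m / 4) = 16 * 2 ^ (m / 4 - 4) := by
        calc 2 ^ (m / 4) = 2 ^ ((m / 4 - 4) + 4) := by congr 1; omega
        _ = 16 * 2 ^ (m / 4 - 4) := by rw [pow_add]; ring
      omega
    have h3 : (m - 3) * 2 ^ (m / 4) ≤ 2 ^ (m / 4 - 4) * 2 ^ (m / 4) :=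
      Nat.mul_le_mul (by omega) le_rfl
    have h4 : 2 ^ (m / 4 - 4) * 2 ^ (m / 4) ≤ 2 ^ (m / 2 - 4) := by
      rw [← pow_add]
      exact Nat.pow_le_pow_right (by norm_num) (by omega)
    have h5 : 1 ≤ 2 ^ (m / 2 - 5) := Nat.one_le_two_pow
    have h6 : 2 ^ (m / 2 - 5) + 2 ^ (m / 2 - 5) = 2 ^ (m / 2 - 4) := by
      have : m / 2 - 4 = (m / 2 - 5) + 1 := by omega
      rw [this, pow_succ]; ring
    have h7 : 2 ^ (m / 2 - 4) + 2 ^ (m / 2 - 4) = 2 ^ (m / 2 - 3) := by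
      have : m / 2 - 3 = (m / 2 - 4) + 1 := by omega
      rw [this, pow_succ]; ring
    omega
  omega

set_option maxHeartbeats 1000000 in
theorem stmt_4 (n : ℕ) (hn : 51 ≤ n) :
    (f n : ℤ) ^ 2 - f (n - 2) * f (n + 2) > 0 := by
  set k := n / 2 with hk
  -- bounds in ℕ
  have hL : 2 ^ n ≤ f n + 2 ^ k + 2 ^ (k - 3) := by
    have h1 := le_f_add n
    have h2 := sum_bound n hn
    rw [← hk] at h2
    omega
  have hU1 : f (n - 2) + 2 ^ (k - 1) ≤ 2 ^ (n - 2) := by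
    have := f_add_le (n - 2)
    have : (n - 2) / 2 = k - 1 := by omega
    have h := f_add_le (n - 2)
    rwa [this] at h
  have hU2 : f (n + 2) + 2 ^ (k + 1) ≤ 2 ^ (n + 2) := by
    have h := f_add_le (n + 2)
    have heq : (n + 2) / 2 = k + 1 := by omega
    rwa [heq] at h
  -- move to ℤ
  set x : ℤ := 2 ^ (k - 3) with hx
  have hx1 : (1 : ℤ) ≤ x := one_le_pow₀ (by norm_num)
  have hpk : (2 : ℤ) ^ k = 8 * x := by
    rw [hx, show (8 : ℤ) = 2 ^ 3 from rfl, ← pow_add]; congr 1; omega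
  have hpk1 : (2 : ℤ) ^ (k - 1) = 4 * x := by
    rw [hx, show (4 : ℤ) = 2 ^ 2 from rfl, ← pow_add]; congr 1; omega
  have hpk2 : (2 : ℤ) ^ (k + 1) = 16 * x := by
    rw [hx, show (16 : ℤ) = 2 ^ 4 from rfl, ← pow_add]; congr 1; omega
  have hf1 : (0 : ℤ) ≤ (f (n - 2) : ℤ) := Int.natCast_nonneg _
  have hf2 : (0 : ℤ) ≤ (f (n + 2) : ℤ) := Int.natCast_nonneg _
  have hLz : (2 : ℤ) ^ n ≤ (f n : ℤ) + 8 * x + x := by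
    have hz : ((2 : ℕ) ^ n : ℤ) ≤ ((f n + 2 ^ k + 2 ^ (k - 3) : ℕ) : ℤ) := by
      exact_mod_cast hL
    push_cast at hz
    rw [hpk, ← hx] at hz
    linarith
  have hU1z : (f (n - 2) : ℤ) ≤ (2 : ℤ) ^ (n - 2) - 4 * x := by
    have hz : ((f (n - 2) + 2 ^ (k - 1) : ℕ) : ℤ) ≤ ((2 : ℕ) ^ (n - 2) : ℤ) := by
      exact_mod_cast hU1
    push_cast at hz
    rw [hpk1] at hz
    linarith
  have hU2z : (f (n + 2) : ℤ) ≤ (2 : ℤ) ^ (n + 2) - 16 * x := by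
    have hz : ((f (n + 2) + 2 ^ (k + 1) : ℕ) : ℤ) ≤ ((2 : ℕ) ^ (n + 2) : ℤ) := by
      exact_mod_cast hU2
    push_cast at hz
    rw [hpk2] at hz
    linarith
  rcases Nat.even_or_odd n with he | ho
  · -- n = 2k
    have hn2 : n = 2 * k := by
      rcases he with ⟨t, ht⟩; omega
    have hpn : (2 : ℤ) ^ n = 64 * x ^ 2 := by
      have : n = (k - 3) + (k - 3) + 6 := by omega
      rw [this, pow_add, pow_add, hx]; ring
    have hpn1 : (2 : ℤ) ^ (n - 2) = 16 * x ^ 2 := by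
      have : n - 2 = (k - 3) + (k - 3) + 4 := by omega
      rw [this, pow_add, pow_add, hx]; ring
    have hpn2 : (2 : ℤ) ^ (n + 2) = 256 * x ^ 2 := by
      have : n + 2 = (k - 3) + (k - 3) + 8 := by omega
      rw [this, pow_add, pow_add, hx]; ring
    rw [hpn] at hLz
    rw [hpn1] at hU1z
    rw [hpn2] at hU2z
    have hx0 : (0 : ℤ) < x := by linarith
    have hLpos : (0 : ℤ) ≤ 64 * x ^ 2 - 9 * x := by nlinarith [sq_nonneg (x - 1)]
    have hfn : 64 * x ^ 2 - 9 * x ≤ (f n : ℤ) := by linarith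
    have hsq : (64 * x ^ 2 - 9 * x) ^ 2 ≤ (f n : ℤ) ^ 2 := pow_le_pow_left₀ hLpos hfn 2
    have hprod : (f (n - 2) : ℤ) * f (n + 2) ≤ (16 * x ^ 2 - 4 * x) * (256 * x ^ 2 - 16 * x) :=
      mul_le_mul hU1z hU2z hf2 (by nlinarith [sq_nonneg (x - 1)])
    have hdiff : (64 * x ^ 2 - 9 * x) ^ 2 - (16 * x ^ 2 - 4 * x) * (256 * x ^ 2 - 16 * x)
        = 128 * x ^ 3 + 17 * x ^ 2 := by ring
    have hcube : (0 : ℤ) < 128 * x ^ 3 + 17 * x ^ 2 := by positivity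
    linarith
  · -- n = 2k + 1
    have hn2 : n = 2 * k + 1 := by
      rcases ho with ⟨t, ht⟩; omega
    have hpn : (2 : ℤ) ^ n = 128 * x ^ 2 := by
      have : n = (k - 3) + (k - 3) + 7 := by omega
      rw [this, pow_add, pow_add, hx]; ring
    have hpn1 : (2 : ℤ) ^ (n - 2) = 32 * x ^ 2 := by
      have : n - 2 = (k - 3) + (k - 3) + 5 := by omega
      rw [this, pow_add, pow_add, hx]; ring
    have hpn2 : (2 : ℤ) ^ (n + 2) = 512 * x ^ 2 := by
      have : n + 2 = (k - 3) + (k - 3) + 9 := by omega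
      rw [this, pow_add, pow_add, hx]; ring
    rw [hpn] at hLz
    rw [hpn1] at hU1z
    rw [hpn2] at hU2z
    have hx0 : (0 : ℤ) < x := by linarith
    have hLpos : (0 : ℤ) ≤ 128 * x ^ 2 - 9 * x := by nlinarith [sq_nonneg (x - 1)]
    have hfn : 128 * x ^ 2 - 9 * x ≤ (f n : ℤ) := by linarith
    have hsq : (128 * x ^ 2 - 9 * x) ^ 2 ≤ (f n : ℤ) ^ 2 := pow_le_pow_left₀ hLpos hfn 2
    have hprod : (f (n - 2) : ℤ) * f (n + 2) ≤ (32 * x ^ 2 - 4 * x) * (512 * x ^ 2 - 16 * x) :=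
      mul_le_mul hU1z hU2z hf2 (by nlinarith [sq_nonneg (x - 1)])
    have hdiff : (128 * x ^ 2 - 9 * x) ^ 2 - (32 * x ^ 2 - 4 * x) * (512 * x ^ 2 - 16 * x)
        = 256 * x ^ 3 + 17 * x ^ 2 := by ring
    have hcube : (0 : ℤ) < 256 * x ^ 3 + 17 * x ^ 2 := by positivity
    linarith
end

section
/- For every integer n ≥ 51, f(n)² − f(n−3)·f(n+3) > 0. -/
/-- Number of subsets of `{1,…,n}` whose gcd is NOT 1 (including the empty set). -/
def E (n : ℕ) : ℕ :=
  ((Finset.Icc 1 n).powerset.filter (fun A => ¬ A.gcd id = 1)).card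

lemma fE (n : ℕ) : f n + E n = 2 ^ n := by
  rw [f, E, Finset.card_filter_add_card_filter_not, Finset.card_powerset,
    Nat.card_Icc, Nat.add_sub_cancel]

lemma E_lb (n : ℕ) : 2 ^ (n / 2) ≤ E n := by
  rw [E]
  have h : ((Finset.Icc 1 (n / 2)).powerset).card ≤
      ((Finset.Icc 1 n).powerset.filter (fun A => ¬ A.gcd id = 1)).card := by
    apply Finset.card_le_card_of_injOn (fun A => A.image (fun x => 2 * x))
    · intro A hA
      simp only [Finset.mem_coe, Finset.mem_powerset] at hA
      simp only [Finset.mem_coe, Finset.mem_filter, Finset.mem_powerset]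
      constructor
      · intro x hx
        simp only [Finset.mem_image] at hx
        obtain ⟨y, hy, rfl⟩ := hx
        have := hA hy
        simp only [Finset.mem_Icc] at this ⊢
        omega
      · intro hgcd
        have h2 : 2 ∣ (A.image (fun x => 2 * x)).gcd id := by
          apply Finset.dvd_gcd
          intro b hb
          simp only [Finset.mem_image] at hb
          obtain ⟨y, _, rfl⟩ := hb
          exact ⟨y, rfl⟩
        rw [hgcd] at h2
        omega
    · intro A _ B _ h
      exact Finset.image_injective (fun a b hab => by omega) h
  calc 2 ^ (n / 2) = ((Finset.Icc 1 (n / 2)).powerset).card := by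
        rw [Finset.card_powerset, Nat.card_Icc, Nat.add_sub_cancel]
    _ ≤ _ := h

lemma E_ub (n : ℕ) (hn : 4 ≤ n) :
    E n ≤ 1 + (2 ^ (n / 2) + 2 ^ (n / 3) + n * 2 ^ (n / 4)) := by
  have hsub : ((Finset.Icc 1 n).powerset.filter (fun A => ¬ A.gcd id = 1)) ⊆
      insert ∅ ((Finset.Icc 2 n).biUnion fun d =>
        ((Finset.Icc 1 (n / d)).image (fun k => d * k)).powerset) := by
    intro A hA
    simp only [Finset.mem_filter, Finset.mem_powerset] at hA
    obtain ⟨hAsub, hgcd⟩ := hA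
    rcases eq_or_ne A ∅ with rfl | hne
    · exact Finset.mem_insert_self _ _
    · apply Finset.mem_insert_of_mem
      obtain ⟨a, ha⟩ := Finset.nonempty_iff_ne_empty.2 hne
      set d := A.gcd id with hd
      have hda : d ∣ a := Finset.gcd_dvd ha
      have ha1 : 1 ≤ a ∧ a ≤ n := by
        have := hAsub ha; simp only [Finset.mem_Icc] at this; exact this
      have hd0 : d ≠ 0 := by
        rintro h0; rw [h0] at hda; omega
      have hdn : d ≤ n := le_trans (Nat.le_of_dvd (by omega) hda) ha1.2
      apply Finset.mem_biUnion.2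
      refine ⟨d, Finset.mem_Icc.2 ⟨by omega, hdn⟩, ?_⟩
      simp only [Finset.mem_powerset]
      intro x hx
      have hdx : d ∣ x := Finset.gcd_dvd hx
      have hx1 : 1 ≤ x ∧ x ≤ n := by
        have := hAsub hx; simp only [Finset.mem_Icc] at this; exact this
      obtain ⟨k, rfl⟩ := hdx
      simp only [Finset.mem_image, Finset.mem_Icc]
      refine ⟨k, ⟨?_, ?_⟩, rfl⟩
      · rcases Nat.eq_zero_or_pos k with rfl | h
        · omega
        · omega
      · refine (Nat.le_div_iff_mul_le (by omega)).2 ?_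
        rw [Nat.mul_comm]
        exact hx1.2
  have hcard : E n ≤ 1 + ∑ d ∈ Finset.Icc 2 n, 2 ^ (n / d) := by
    calc E n ≤ (insert ∅ ((Finset.Icc 2 n).biUnion fun d =>
          ((Finset.Icc 1 (n / d)).image (fun k => d * k)).powerset)).card :=
        Finset.card_le_card hsub
      _ ≤ 1 + ((Finset.Icc 2 n).biUnion fun d =>
          ((Finset.Icc 1 (n / d)).image (fun k => d * k)).powerset).card := by
        rw [add_comm]; exact Finset.card_insert_le _ _
      _ ≤ 1 + ∑ d ∈ Finset.Icc 2 n,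
          (((Finset.Icc 1 (n / d)).image (fun k => d * k)).powerset).card := by
        gcongr; exact Finset.card_biUnion_le
      _ ≤ 1 + ∑ d ∈ Finset.Icc 2 n, 2 ^ (n / d) := by
        gcongr with d hd
        rw [Finset.card_powerset]
        apply Nat.pow_le_pow_right (by norm_num)
        calc ((Finset.Icc 1 (n / d)).image (fun k => d * k)).card
            ≤ (Finset.Icc 1 (n / d)).card := Finset.card_image_le
          _ = n / d := by rw [Nat.card_Icc, Nat.add_sub_cancel]
  have h2 : ∑ d ∈ Finset.Ico 4 (n + 1), 2 ^ (n / d) ≤ n * 2 ^ (n / 4) := by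
    calc ∑ d ∈ Finset.Ico 4 (n + 1), 2 ^ (n / d)
        ≤ ∑ _d ∈ Finset.Ico 4 (n + 1), 2 ^ (n / 4) := by
          apply Finset.sum_le_sum
          intro d hd
          apply Nat.pow_le_pow_right (by norm_num)
          exact Nat.div_le_div_left (Finset.mem_Ico.1 hd).1 (by omega)
      _ = (n + 1 - 4) * 2 ^ (n / 4) := by
          rw [Finset.sum_const, smul_eq_mul, Nat.card_Ico]
      _ ≤ n * 2 ^ (n / 4) := Nat.mul_le_mul_right _ (by omega)
  have hsum : ∑ d ∈ Finset.Icc 2 n, 2 ^ (n / d)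
      ≤ 2 ^ (n / 2) + 2 ^ (n / 3) + n * 2 ^ (n / 4) := by
    have hIcc : Finset.Icc 2 n = Finset.Ico 2 (n + 1) := by
      ext x; simp [Nat.lt_succ_iff]
    rw [hIcc, ← Finset.sum_Ico_consecutive (fun d => 2 ^ (n / d))
      (by omega : 2 ≤ 4) (by omega : 4 ≤ n + 1)]
    have h24 : Finset.Ico 2 4 = {2, 3} := rfl
    have h1 : ∑ d ∈ ({2, 3} : Finset ℕ), 2 ^ (n / d) = 2 ^ (n / 2) + 2 ^ (n / 3) :=
      Finset.sum_pair (by norm_num)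
    rw [h24, h1]
    linarith
  calc E n ≤ 1 + ∑ d ∈ Finset.Icc 2 n, 2 ^ (n / d) := hcard
    _ ≤ 1 + (2 ^ (n / 2) + 2 ^ (n / 3) + n * 2 ^ (n / 4)) := by linarith

lemma aux8 (k : ℕ) (hk : 6 ≤ k) : 8 * k + 8 ≤ 2 ^ k := by
  induction k, hk using Nat.le_induction with
  | base => norm_num
  | succ k hk ih =>
    have : 8 ≤ 2 ^ k := by
      calc (8:ℕ) = 2 ^ 3 := rfl
        _ ≤ 2 ^ k := Nat.pow_le_pow_right (by norm_num) (by omega)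
    calc 8 * (k + 1) + 8 = (8 * k + 8) + 8 := by ring
      _ ≤ 2 ^ k + 2 ^ k := by omega
      _ = 2 ^ (k + 1) := by ring

lemma n_lt_pow (n : ℕ) (hn : 51 ≤ n) : n < 2 ^ (n / 4 - 6) := by
  set k := n / 4 - 6 with hkdef
  have hk : 6 ≤ k := by omega
  have h1 : n ≤ 4 * k + 27 := by omega
  have h2 := aux8 k hk
  omega

lemma keyNat (n : ℕ) (hn : 51 ≤ n) :
    2 ^ (n + 1) * (1 + (2 ^ (n / 2) + 2 ^ (n / 3) + n * 2 ^ (n / 4)))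
      + 2 ^ ((n - 3) / 2) * 2 ^ ((n + 3) / 2)
    < 2 ^ (n - 3) * 2 ^ ((n + 3) / 2) + 2 ^ (n + 3) * 2 ^ ((n - 3) / 2) := by
  have hT2 : 2 ^ (n + 1) * 2 ^ (n / 2) ≤ 2 ^ (n + 3) * 2 ^ ((n - 3) / 2) := by
    rw [← pow_add, ← pow_add]
    exact Nat.pow_le_pow_right (by norm_num) (by omega)
  have hT1 : 2 ^ (n - 2 + n / 2) ≤ 2 ^ (n - 3) * 2 ^ ((n + 3) / 2) := by
    rw [← pow_add]
    exact Nat.pow_le_pow_right (by norm_num) (by omega)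
  have hR0 : 2 ^ (n + 1) < 2 ^ (n - 4 + n / 2) :=
    Nat.pow_lt_pow_right (by norm_num) (by omega)
  have hR2 : 2 ^ (n + 1) * 2 ^ (n / 3) ≤ 2 ^ (n - 4 + n / 2) := by
    rw [← pow_add]
    exact Nat.pow_le_pow_right (by norm_num) (by omega)
  have hR4 : 2 ^ ((n - 3) / 2) * 2 ^ ((n + 3) / 2) ≤ 2 ^ (n - 4 + n / 2) := by
    rw [← pow_add]
    exact Nat.pow_le_pow_right (by norm_num) (by omega)
  have hR3 : n * (2 ^ (n + 1) * 2 ^ (n / 4)) ≤ 2 ^ (n - 4 + n / 2) := by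
    have hnp := n_lt_pow n hn
    calc n * (2 ^ (n + 1) * 2 ^ (n / 4))
        ≤ 2 ^ (n / 4 - 6) * (2 ^ (n + 1) * 2 ^ (n / 4)) := by
          exact Nat.mul_le_mul_right _ (le_of_lt hnp)
      _ = 2 ^ (n / 4 - 6 + (n + 1 + n / 4)) := by rw [← pow_add, ← pow_add]
      _ ≤ 2 ^ (n - 4 + n / 2) := Nat.pow_le_pow_right (by norm_num) (by omega)
  have hsplit : 2 ^ (n - 2 + n / 2) = 4 * 2 ^ (n - 4 + n / 2) := by
    have : n - 2 + n / 2 = 2 + (n - 4 + n / 2) := by omega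
    rw [this, pow_add]; norm_num
  have expand : 2 ^ (n + 1) * (1 + (2 ^ (n / 2) + 2 ^ (n / 3) + n * 2 ^ (n / 4)))
      = 2 ^ (n + 1) + 2 ^ (n + 1) * 2 ^ (n / 2) + 2 ^ (n + 1) * 2 ^ (n / 3)
        + n * (2 ^ (n + 1) * 2 ^ (n / 4)) := by ring
  rw [expand]
  linarith [hT1, hT2, hR0, hR2, hR3, hR4, hsplit]

lemma U_le (n : ℕ) (hn : 51 ≤ n) :
    1 + (2 ^ (n / 2) + 2 ^ (n / 3) + n * 2 ^ (n / 4)) ≤ 2 ^ n := by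
  have h1 : (1:ℕ) ≤ 2 ^ (n - 2) := Nat.one_le_two_pow
  have h2 : 2 ^ (n / 2) ≤ 2 ^ (n - 2) := Nat.pow_le_pow_right (by norm_num) (by omega)
  have h3 : 2 ^ (n / 3) ≤ 2 ^ (n - 2) := Nat.pow_le_pow_right (by norm_num) (by omega)
  have h4 : n * 2 ^ (n / 4) ≤ 2 ^ (n - 2) := by
    have hnp := n_lt_pow n hn
    calc n * 2 ^ (n / 4) ≤ 2 ^ (n / 4 - 6) * 2 ^ (n / 4) :=
          Nat.mul_le_mul_right _ (le_of_lt hnp)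
      _ = 2 ^ (n / 4 - 6 + n / 4) := by rw [← pow_add]
      _ ≤ 2 ^ (n - 2) := Nat.pow_le_pow_right (by norm_num) (by omega)
  have h5 : 4 * 2 ^ (n - 2) ≤ 2 ^ n := by
    calc 4 * 2 ^ (n - 2) = 2 ^ (2 + (n - 2)) := by rw [pow_add]; ring
      _ ≤ 2 ^ n := Nat.pow_le_pow_right (by norm_num) (by omega)
  linarith [h1, h2, h3, h4, h5]

theorem stmt_5 (n : ℕ) (hn : 51 ≤ n) :
    (f n : ℤ) ^ 2 - f (n - 3) * f (n + 3) > 0 := by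
  have hfE := fE n
  have hfEm := fE (n - 3)
  have hfEp := fE (n + 3)
  have hEub := E_ub n (by omega)
  have hElbm := E_lb (n - 3)
  have hElbp := E_lb (n + 3)
  have hU := U_le n hn
  have hkey := keyNat n hn
  -- abbreviations over ℤ
  set U : ℤ := 1 + (2 ^ (n / 2) + 2 ^ (n / 3) + (n : ℤ) * 2 ^ (n / 4)) with hUdef
  have ha : (2:ℤ) ^ n - U ≤ (f n : ℤ) := by
    have h : 2 ^ n ≤ f n + (1 + (2 ^ (n / 2) + 2 ^ (n / 3) + n * 2 ^ (n / 4))) := by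
      linarith [hfE, hEub]
    have := Nat.cast_le (α := ℤ) |>.2 h
    push_cast at this
    rw [hUdef]; linarith
  have hU0 : (0:ℤ) ≤ 2 ^ n - U := by
    have := Nat.cast_le (α := ℤ) |>.2 hU
    push_cast at this
    rw [hUdef]; linarith
  have hb : (f (n - 3) : ℤ) ≤ 2 ^ (n - 3) - 2 ^ ((n - 3) / 2) := by
    have h : f (n - 3) + 2 ^ ((n - 3) / 2) ≤ 2 ^ (n - 3) := by
      linarith [hfEm, hElbm]
    have := Nat.cast_le (α := ℤ) |>.2 h
    push_cast at this
    linarith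
  have hc : (f (n + 3) : ℤ) ≤ 2 ^ (n + 3) - 2 ^ ((n + 3) / 2) := by
    have h : f (n + 3) + 2 ^ ((n + 3) / 2) ≤ 2 ^ (n + 3) := by
      linarith [hfEp, hElbp]
    have := Nat.cast_le (α := ℤ) |>.2 h
    push_cast at this
    linarith
  have hb0 : (0:ℤ) ≤ (f (n - 3) : ℤ) := Nat.cast_nonneg _
  have hc0 : (0:ℤ) ≤ (f (n + 3) : ℤ) := Nat.cast_nonneg _
  have hkeyZ : (2:ℤ) ^ (n + 1) * U + 2 ^ ((n - 3) / 2) * 2 ^ ((n + 3) / 2)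
      < 2 ^ (n - 3) * 2 ^ ((n + 3) / 2) + 2 ^ (n + 3) * 2 ^ ((n - 3) / 2) := by
    have := Nat.cast_lt (α := ℤ) |>.2 hkey
    push_cast at this
    rw [hUdef]; linarith
  have e1 : (2:ℤ) ^ (n - 3) * 2 ^ (n + 3) = 2 ^ n * 2 ^ n := by
    rw [← pow_add, ← pow_add]; congr 1; omega
  have e2 : (2:ℤ) ^ (n + 1) = 2 * 2 ^ n := by rw [pow_succ]; ring
  -- squared lower bound
  have hsq : ((2:ℤ) ^ n - U) ^ 2 ≤ (f n : ℤ) ^ 2 := pow_le_pow_left₀ hU0 ha 2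
  have hbc0 : (0:ℤ) ≤ 2 ^ (n - 3) - 2 ^ ((n - 3) / 2) := le_trans hb0 hb
  have hprod : (f (n - 3) : ℤ) * (f (n + 3) : ℤ)
      ≤ (2 ^ (n - 3) - 2 ^ ((n - 3) / 2)) * (2 ^ (n + 3) - 2 ^ ((n + 3) / 2)) :=
    mul_le_mul hb hc hc0 hbc0
  have h6 : ((2:ℤ) ^ n - U) ^ 2
      - (2 ^ (n - 3) - 2 ^ ((n - 3) / 2)) * (2 ^ (n + 3) - 2 ^ ((n + 3) / 2))
      = U ^ 2 + ((2 ^ (n - 3) * 2 ^ ((n + 3) / 2) + 2 ^ (n + 3) * 2 ^ ((n - 3) / 2))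
        - (2 ^ (n + 1) * U + 2 ^ ((n - 3) / 2) * 2 ^ ((n + 3) / 2))) := by
    linear_combination (-1 : ℤ) * e1 + U * e2
  have hmain : ((2:ℤ) ^ n - U) ^ 2
      - (2 ^ (n - 3) - 2 ^ ((n - 3) / 2)) * (2 ^ (n + 3) - 2 ^ ((n + 3) / 2)) > 0 := by
    rw [h6]
    have hUsq : (0:ℤ) ≤ U ^ 2 := sq_nonneg U
    linarith
  linarith
end

section
/- For every integer n ≥ 36, f(n)² − f(n−7)·f(n+7) > 0. -/
def fB (n : ℕ) : ℕ :=
  ((Finset.Icc 1 n).powerset.filter (fun A => ¬ A.gcd id = 1)).card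

lemma f_add_fB (n : ℕ) : f n + fB n = 2 ^ n := by
  rw [f, fB, Finset.card_filter_add_card_filter_not, Finset.card_powerset,
    Nat.card_Icc]
  simp

lemma image_div_mul (d : ℕ) (A : Finset ℕ) (h : ∀ a ∈ A, d ∣ a) :
    (A.image (· / d)).image (d * ·) = A := by
  rw [Finset.image_image]
  have h2 : A.image ((d * ·) ∘ (· / d)) = A.image id :=
    Finset.image_congr (fun a ha => Nat.mul_div_cancel' (h a ha))
  simpa using h2

lemma fB_lower (m : ℕ) : 2 ^ (m / 2) ≤ fB m := by
  rw [fB]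
  have h := Finset.card_le_card_of_injOn (fun S => S.image (fun x => 2 * x))
    (s := (Finset.Icc 1 (m/2)).powerset)
    (t := (Finset.Icc 1 m).powerset.filter (fun A => ¬ A.gcd id = 1)) ?_ ?_
  · calc 2 ^ (m/2) = (Finset.Icc 1 (m/2)).powerset.card := by
          rw [Finset.card_powerset, Nat.card_Icc, Nat.add_sub_cancel]
       _ ≤ _ := h
  · intro S hS
    simp only [Finset.mem_coe, Finset.mem_powerset] at hS
    simp only [Finset.mem_coe, Finset.mem_filter, Finset.mem_powerset]
    refine ⟨?_, ?_⟩
    · intro x hx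
      simp only [Finset.mem_image] at hx
      obtain ⟨s, hs, rfl⟩ := hx
      have := hS hs
      simp only [Finset.mem_Icc] at this ⊢
      omega
    · have h2 : 2 ∣ (S.image (fun x => 2 * x)).gcd id := by
        apply Finset.dvd_gcd
        intro b hb
        simp only [Finset.mem_image] at hb
        obtain ⟨s, _, rfl⟩ := hb
        exact Dvd.intro s rfl
      intro h1
      rw [h1] at h2
      omega
  · intro S hS T hT h
    exact Finset.image_injective (fun a b hab => by omega) h

lemma fB_upper (m : ℕ) : fB m ≤ 2 ^ (m / 2) + m * 2 ^ (m / 3) := by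
  classical
  rw [fB]
  set s := (Finset.Icc 1 m).powerset.filter (fun A => ¬ A.gcd id = 1) with hs
  have hsplit : s.card = (s.filter (fun A => 2 ∣ A.gcd id)).card
      + (s.filter (fun A => ¬ 2 ∣ A.gcd id)).card :=
    (Finset.card_filter_add_card_filter_not _).symm
  have h1 : (s.filter (fun A => 2 ∣ A.gcd id)).card ≤ 2 ^ (m / 2) := by
    have key := Finset.card_le_card_of_injOn (fun A => A.image (· / 2))
      (s := s.filter (fun A => 2 ∣ A.gcd id))
      (t := (Finset.Icc 1 (m/2)).powerset) ?_ ?_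
    · calc _ ≤ (Finset.Icc 1 (m/2)).powerset.card := key
        _ = 2 ^ (m/2) := by rw [Finset.card_powerset, Nat.card_Icc, Nat.add_sub_cancel]
    · intro A hA
      simp only [hs, Finset.mem_coe, Finset.mem_filter, Finset.mem_powerset] at hA
      obtain ⟨⟨hsub, _⟩, hdvd⟩ := hA
      simp only [Finset.mem_coe, Finset.mem_powerset]
      intro x hx
      simp only [Finset.mem_image] at hx
      obtain ⟨a, ha, rfl⟩ := hx
      have ham := hsub ha
      have h2a : 2 ∣ a := hdvd.trans (Finset.gcd_dvd ha)
      simp only [Finset.mem_Icc] at ham ⊢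
      omega
    · intro A hA A' hA' h
      simp only [hs, Finset.mem_coe, Finset.mem_filter, Finset.mem_powerset] at hA hA'
      have e1 : ∀ a ∈ A, 2 ∣ a := fun a ha => hA.2.trans (Finset.gcd_dvd ha)
      have e2 : ∀ a ∈ A', 2 ∣ a := fun a ha => hA'.2.trans (Finset.gcd_dvd ha)
      rw [← image_div_mul 2 A e1, ← image_div_mul 2 A' e2]
      exact congrArg _ h
  have h2 : (s.filter (fun A => ¬ 2 ∣ A.gcd id)).card ≤ m * 2 ^ (m / 3) := by
    have key := Finset.card_le_card_of_injOn
      (fun A => (A.gcd id, A.image (· / A.gcd id)))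
      (s := s.filter (fun A => ¬ 2 ∣ A.gcd id))
      (t := (Finset.Icc 3 m) ×ˢ (Finset.Icc 1 (m/3)).powerset) ?_ ?_
    · calc _ ≤ _ := key
        _ = (Finset.Icc 3 m).card * 2^(m/3) := by
            rw [Finset.card_product, Finset.card_powerset, Nat.card_Icc 1 (m/3), Nat.add_sub_cancel]
        _ ≤ m * 2^(m/3) := Nat.mul_le_mul_right _ (by rw [Nat.card_Icc]; omega)
    · intro A hA
      simp only [hs, Finset.mem_coe, Finset.mem_filter, Finset.mem_powerset] at hA
      obtain ⟨⟨hsub, hne1⟩, hodd⟩ := hA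
      have hA_ne : A.Nonempty := by
        rcases A.eq_empty_or_nonempty with rfl | h
        · simp [Finset.gcd_empty] at hodd
        · exact h
      obtain ⟨a0, ha0⟩ := hA_ne
      have hd_dvd : A.gcd id ∣ a0 := Finset.gcd_dvd ha0
      have ha0m : 1 ≤ a0 ∧ a0 ≤ m := by
        have := hsub ha0; simpa [Finset.mem_Icc] using this
      have hd_le : A.gcd id ≤ m := le_trans (Nat.le_of_dvd (by omega) hd_dvd) ha0m.2
      have hd3 : 3 ≤ A.gcd id := by omega
      simp only [Finset.mem_coe, Finset.mem_product, Finset.mem_Icc, Finset.mem_powerset]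
      refine ⟨⟨hd3, hd_le⟩, ?_⟩
      intro x hx
      simp only [Finset.mem_image] at hx
      obtain ⟨a, ha, rfl⟩ := hx
      have hdvd : A.gcd id ∣ a := Finset.gcd_dvd ha
      have ham : 1 ≤ a ∧ a ≤ m := by
        have := hsub ha; simpa [Finset.mem_Icc] using this
      have hle : A.gcd id ≤ a := Nat.le_of_dvd (by omega) hdvd
      simp only [Finset.mem_Icc]
      constructor
      · exact (Nat.one_le_div_iff (by omega)).mpr hle
      · calc a / A.gcd id ≤ m / A.gcd id := Nat.div_le_div_right ham.2
          _ ≤ m / 3 := Nat.div_le_div_left hd3 (by omega)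
    · intro A hA A' hA' h
      have hdd : A.gcd id = A'.gcd id := congrArg Prod.fst h
      have him : A.image (· / A.gcd id) = A'.image (· / A'.gcd id) := congrArg Prod.snd h
      have e1 : ∀ a ∈ A, A.gcd id ∣ a := fun a ha => Finset.gcd_dvd ha
      have e2 : ∀ a ∈ A', A'.gcd id ∣ a := fun a ha => Finset.gcd_dvd ha
      calc A = (A.image (· / A.gcd id)).image (A.gcd id * ·) := (image_div_mul _ A e1).symm
        _ = (A'.image (· / A'.gcd id)).image (A'.gcd id * ·) := by rw [him, hdd]
        _ = A' := image_div_mul _ A' e2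
  omega

lemma six_mul_le (k : ℕ) (h : 6 ≤ k) : 6 * k + 6 ≤ 2 ^ k := by
  induction k with
  | zero => omega
  | succ j ih =>
    rcases Nat.lt_or_ge j 6 with hj | hj
    · have hj5 : j = 5 := by omega
      subst hj5; norm_num
    · have h1 := ih hj
      have h2 : 2 ^ (j+1) = 2 * 2 ^ j := by ring
      omega

theorem stmt_9 (n : ℕ) (hn : 36 ≤ n) :
    (f n : ℤ) ^ 2 - f (n - 7) * f (n + 7) > 0 := by
  obtain ⟨m, rfl⟩ : ∃ m, n = m + 36 := ⟨n - 36, by omega⟩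
  have h7 : m + 36 - 7 = m + 29 := by omega
  rw [h7]
  set q := (m + 36) / 6 with hq
  set b3 := (m + 36) / 3 with hb3
  set a := (m + 36) / 2 with ha
  have hq6 : 6 ≤ q := by omega
  have hn_le : m + 36 ≤ 2 ^ q := le_trans (by omega) (six_mul_le q hq6)
  have hpow : ∀ {i j : ℕ}, i ≤ j → (2:ℕ) ^ i ≤ 2 ^ j :=
    fun h => Nat.pow_le_pow_right (by norm_num) h
  have hX : fB (m+36) ≤ 2 ^ (a+1) := by
    have h := fB_upper (m+36)
    have h2 : (m+36) * 2 ^ b3 ≤ 2 ^ a := by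
      calc (m+36) * 2^b3 ≤ 2^q * 2^b3 := Nat.mul_le_mul_right _ hn_le
        _ = 2^(q+b3) := by rw [pow_add]
        _ ≤ 2^a := hpow (by omega)
    calc fB (m+36) ≤ 2^a + (m+36)*2^b3 := h
      _ ≤ 2^a + 2^a := Nat.add_le_add_left h2 _
      _ = 2^(a+1) := by ring
  have hR : fB (m+43) ≤ 2 ^ (a+5) := by
    have h := fB_upper (m+43)
    have e1 : 2^((m+43)/2) ≤ 2^(a+4) := hpow (by omega)
    have e2 : (m+43) * 2^((m+43)/3) ≤ 2^(a+4) := by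
      calc (m+43) * 2^((m+43)/3) ≤ (2*2^q) * 2^(b3+3) :=
            Nat.mul_le_mul (by omega) (hpow (by omega))
        _ = 2^(q+b3+4) := by ring
        _ ≤ 2^(a+4) := hpow (by omega)
    calc fB (m+43) ≤ 2^((m+43)/2) + (m+43)*2^((m+43)/3) := h
      _ ≤ 2^(a+4) + 2^(a+4) := Nat.add_le_add e1 e2
      _ = 2^(a+5) := by ring
  have hL_up : fB (m+29) ≤ 2 ^ (a+1) := by
    have h := fB_upper (m+29)
    have e1 : 2^((m+29)/2) ≤ 2^a := hpow (by omega)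
    have e2 : (m+29) * 2^((m+29)/3) ≤ 2^a := by
      calc (m+29)*2^((m+29)/3) ≤ 2^q * 2^b3 :=
            Nat.mul_le_mul (by omega) (hpow (by omega))
        _ = 2^(q+b3) := by rw [pow_add]
        _ ≤ 2^a := hpow (by omega)
    calc fB (m+29) ≤ 2^((m+29)/2) + (m+29)*2^((m+29)/3) := h
      _ ≤ 2^a + 2^a := Nat.add_le_add e1 e2
      _ = 2^(a+1) := by ring
  have hL_lo : 2 ^ a ≤ 16 * fB (m+29) := by
    calc 2^a ≤ 2^((m+29)/2 + 4) := hpow (by omega)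
      _ = 16 * 2^((m+29)/2) := by ring
      _ ≤ 16 * fB (m+29) := Nat.mul_le_mul_left _ (fB_lower (m+29))
  have key : 2^(m+37) * fB (m+36) + fB (m+29) * fB (m+43) < 2^(m+43) * fB (m+29) := by
    have t1 : 2^(m+37) * fB (m+36) ≤ 2^(m+a+38) := by
      calc 2^(m+37) * fB (m+36) ≤ 2^(m+37) * 2^(a+1) := Nat.mul_le_mul_left _ hX
        _ = 2^(m+a+38) := by rw [← pow_add]; ring_nf
    have t2 : fB (m+29) * fB (m+43) ≤ 2^(m+a+37) := by
      calc fB (m+29) * fB (m+43) ≤ 2^(a+1) * 2^(a+5) := Nat.mul_le_mul hL_up hR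
        _ = 2^(2*a+6) := by rw [← pow_add]; ring_nf
        _ ≤ 2^(m+a+37) := hpow (by omega)
    have t3 : 2^(m+a+39) ≤ 2^(m+43) * fB (m+29) := by
      calc 2^(m+a+39) = 2^(m+39) * 2^a := by rw [← pow_add]; ring_nf
        _ ≤ 2^(m+39) * (16 * fB (m+29)) := Nat.mul_le_mul_left _ hL_lo
        _ = 2^(m+43) * fB (m+29) := by ring
    have e38 : (2:ℕ)^(m+a+38) = 2 * 2^(m+a+37) := by ring
    have e39 : (2:ℕ)^(m+a+39) = 4 * 2^(m+a+37) := by ring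
    have hpos : 0 < (2:ℕ)^(m+a+37) := Nat.pow_pos (by norm_num)
    omega
  have hcast : ∀ k : ℕ, (f k : ℤ) = 2^k - fB k := by
    intro k
    have h := f_add_fB k
    have h' : (f k : ℤ) + fB k = 2^k := by exact_mod_cast congrArg (Nat.cast : ℕ → ℤ) h
    linarith
  rw [hcast (m+36), hcast (m+29), hcast (m+43)]
  have keyZ : (2:ℤ)^(m+37) * fB (m+36) + (fB (m+29) : ℤ) * fB (m+43)
      < 2^(m+43) * fB (m+29) := by exact_mod_cast key
  have expand : ((2:ℤ)^(m+36) - (fB (m+36):ℤ))^2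
      - ((2:ℤ)^(m+29) - fB (m+29)) * ((2:ℤ)^(m+43) - fB (m+43))
      = ((2:ℤ)^(m+43) * fB (m+29) - ((2:ℤ)^(m+37) * fB (m+36) + (fB (m+29):ℤ) * fB (m+43)))
        + (2:ℤ)^(m+29) * fB (m+43) + (fB (m+36):ℤ)^2 := by ring
  have p1 : (0:ℤ) ≤ 2^(m+29) * fB (m+43) :=
    mul_nonneg (pow_nonneg (by norm_num) _) (Int.natCast_nonneg _)
  have p2 : (0:ℤ) ≤ (fB (m+36):ℤ)^2 := sq_nonneg _
  rw [gt_iff_lt, expand]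
  linarith [keyZ]
end

section
/- For every integer n ≥ 36, f(n)² − f(n−8)·f(n+8) > 0. -/
open Finset

namespace Aux

/-- multiples of `d` in `Icc 1 n` -/
def M (d n : ℕ) : Finset ℕ := (Finset.Icc 1 (n / d)).image (fun k => d * k)

lemma M_card (d n : ℕ) (hd : 0 < d) : (M d n).card = n / d := by
  rw [M, card_image_of_injective _ (fun a b h => Nat.eq_of_mul_eq_mul_left hd h)]
  simp

lemma subset_M {n d : ℕ} (hd : 0 < d) {A : Finset ℕ} (hA : A ⊆ Finset.Icc 1 n)
    (hdvd : ∀ x ∈ A, d ∣ x) : A ⊆ M d n := by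
  intro x hx
  obtain ⟨k, rfl⟩ := hdvd x hx
  have hx' := hA hx
  simp only [Finset.mem_Icc] at hx'
  simp only [M, Finset.mem_image, Finset.mem_Icc]
  refine ⟨k, ⟨?_, ?_⟩, rfl⟩
  · rcases Nat.eq_zero_or_pos k with rfl | h
    · simp at hx'
    · exact h
  · rw [Nat.le_div_iff_mul_le hd, mul_comm]
    exact hx'.2

lemma gcd_ne_one_of_mem_Mpow {n d : ℕ} (hd : 2 ≤ d) {A : Finset ℕ}
    (hA : A ⊆ M d n) : A.gcd id ≠ 1 := by
  have h2 : d ∣ A.gcd id := by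
    apply Finset.dvd_gcd
    intro b hb
    have := hA hb
    simp only [M, Finset.mem_image] at this
    obtain ⟨k, _, rfl⟩ := this
    exact ⟨k, rfl⟩
  intro h
  rw [h] at h2
  have := Nat.le_of_dvd one_pos h2
  omega

lemma f_upper (n : ℕ) (hn : 2 ≤ n) : f n + 2 ^ (n / 2) ≤ 2 ^ n := by
  have hdisj : Disjoint ((Finset.Icc 1 n).powerset.filter (fun A => A.gcd id = 1))
      (M 2 n).powerset := by
    rw [Finset.disjoint_left]
    intro A hA hA2
    simp only [Finset.mem_filter] at hA
    simp only [Finset.mem_powerset] at hA2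
    exact gcd_ne_one_of_mem_Mpow le_rfl hA2 hA.2
  have hsub : ((Finset.Icc 1 n).powerset.filter (fun A => A.gcd id = 1)) ∪ (M 2 n).powerset
      ⊆ (Finset.Icc 1 n).powerset := by
    apply Finset.union_subset (Finset.filter_subset _ _)
    intro A hA
    simp only [Finset.mem_powerset] at hA ⊢
    refine hA.trans ?_
    intro x hx
    simp only [M, Finset.mem_image, Finset.mem_Icc] at hx
    obtain ⟨k, ⟨hk1, hk2⟩, rfl⟩ := hx
    simp only [Finset.mem_Icc]
    constructor
    · omega
    · calc 2 * k ≤ 2 * (n / 2) := by omega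
        _ ≤ n := Nat.mul_div_le n 2
  have := Finset.card_le_card hsub
  rw [Finset.card_union_of_disjoint hdisj] at this
  rw [Finset.card_powerset, M_card 2 n (by norm_num), Finset.card_powerset,
    Nat.card_Icc] at this
  simpa [f] using this

lemma f_lower (n : ℕ) (hn : 2 ≤ n) :
    2 ^ n ≤ f n + (2 ^ (n / 2) + (n - 2) * 2 ^ (n / 3)) := by
  classical
  have hpart := Finset.card_filter_add_card_filter_not
    (s := (Finset.Icc 1 n).powerset) (p := fun A => A.gcd id = 1)
  set bad := (Finset.Icc 1 n).powerset.filter (fun A => ¬ A.gcd id = 1) with hbad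
  have hpc : ((Finset.Icc 1 n).powerset).card = 2 ^ n := by
    rw [Finset.card_powerset, Nat.card_Icc]; simp
  have hcard : f n + bad.card = 2 ^ n := by rw [f]; omega
  have hbadle : bad.card ≤ ∑ d ∈ Finset.Icc 2 n, 2 ^ (n / d) := by
    have hsub : bad ⊆ (Finset.Icc 2 n).biUnion (fun d => (M d n).powerset) := by
      intro A hA
      simp only [hbad, Finset.mem_filter, Finset.mem_powerset] at hA
      obtain ⟨hAsub, hAg⟩ := hA
      simp only [Finset.mem_biUnion, Finset.mem_Icc, Finset.mem_powerset]
      rcases A.eq_empty_or_nonempty with rfl | ⟨x, hx⟩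
      · exact ⟨2, ⟨le_rfl, hn⟩, Finset.empty_subset _⟩
      · set g := A.gcd id with hg
        have hgx : g ∣ x := Finset.gcd_dvd hx
        have hx' := hAsub hx
        simp only [Finset.mem_Icc] at hx'
        have hgpos : 0 < g := Nat.pos_of_dvd_of_pos hgx (by omega)
        have hgn : g ≤ n := le_trans (Nat.le_of_dvd (by omega) hgx) hx'.2
        refine ⟨g, ⟨by omega, hgn⟩, subset_M hgpos hAsub ?_⟩
        intro y hy
        exact Finset.gcd_dvd hy
    calc bad.card ≤ ((Finset.Icc 2 n).biUnion (fun d => (M d n).powerset)).card :=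
          Finset.card_le_card hsub
      _ ≤ ∑ d ∈ Finset.Icc 2 n, ((M d n).powerset).card := Finset.card_biUnion_le
      _ = ∑ d ∈ Finset.Icc 2 n, 2 ^ (n / d) := by
          apply Finset.sum_congr rfl
          intro d hd
          simp only [Finset.mem_Icc] at hd
          rw [Finset.card_powerset, M_card d n (by omega)]
  have hsum : ∑ d ∈ Finset.Icc 2 n, 2 ^ (n / d) ≤ 2 ^ (n / 2) + (n - 2) * 2 ^ (n / 3) := by
    have hins : Finset.Icc 2 n = insert 2 (Finset.Icc 3 n) := by
      ext x; simp only [Finset.mem_Icc, Finset.mem_insert]; omega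
    rw [hins, Finset.sum_insert (by simp)]
    have h2 : ∑ d ∈ Finset.Icc 3 n, 2 ^ (n / d) ≤ (n - 2) * 2 ^ (n / 3) := by
      have := Finset.sum_le_card_nsmul (Finset.Icc 3 n) (fun d => 2 ^ (n / d)) (2 ^ (n / 3))
        (fun d hd => by
          simp only [Finset.mem_Icc] at hd
          exact Nat.pow_le_pow_right (by norm_num) (Nat.div_le_div_left hd.1 (by omega)))
      simpa [Nat.card_Icc, smul_eq_mul] using this
    omega
  omega

end Aux

set_option maxHeartbeats 1000000 in
theorem stmt_10 (n : ℕ) (hn : 36 ≤ n) :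
    (f n : ℤ) ^ 2 - f (n - 8) * f (n + 8) > 0 := by
  obtain ⟨c, hc⟩ : ∃ c, n = c + 2 := ⟨n - 2, by omega⟩
  have hU8 : f (n - 8) + 2 ^ ((n - 8) / 2) ≤ 2 ^ (n - 8) := Aux.f_upper (n - 8) (by omega)
  have hL : 2 ^ n ≤ f n + (2 ^ (n / 2) + c * 2 ^ (n / 3)) := by
    have := Aux.f_lower n (by omega)
    have hc2 : n - 2 = c := by omega
    rwa [hc2] at this
  have hUtriv : f (n + 8) ≤ 2 ^ (n + 8) := by
    calc f (n + 8) ≤ ((Finset.Icc 1 (n + 8)).powerset).card := Finset.card_filter_le _ _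
      _ = 2 ^ (n + 8) := by rw [Finset.card_powerset, Nat.card_Icc]; simp
  have h2m : n / 6 + 1 ≤ 2 ^ (n / 6) := Nat.lt_two_pow_self
  have hkeyN : c * 2 ^ (n / 3) < 7 * 2 ^ (n / 2) := by
    have h1 : c < 7 * 2 ^ (n / 2 - n / 3) := by
      calc c < 7 * (n / 6 + 1) := by omega
        _ ≤ 7 * 2 ^ (n / 6) := Nat.mul_le_mul_left _ h2m
        _ ≤ 7 * 2 ^ (n / 2 - n / 3) :=
            Nat.mul_le_mul_left _ (Nat.pow_le_pow_right (by norm_num) (by omega))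
    calc c * 2 ^ (n / 3) < (7 * 2 ^ (n / 2 - n / 3)) * 2 ^ (n / 3) :=
          Nat.mul_lt_mul_of_lt_of_le h1 le_rfl (Nat.pow_pos (by norm_num))
      _ = 7 * 2 ^ (n / 2) := by rw [mul_assoc, ← pow_add]; congr 2; omega
  -- move to ℤ
  have hPpos : (0 : ℤ) < 2 ^ n := by positivity
  have hApos : (0 : ℤ) < 2 ^ (n / 2) := by positivity
  have hkey : (c : ℤ) * 2 ^ (n / 3) < 7 * 2 ^ (n / 2) := by exact_mod_cast hkeyN
  have h16A : 16 * (2 : ℤ) ^ (n / 2) ≤ 2 ^ n := by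
    calc (16 : ℤ) * 2 ^ (n / 2) = 2 ^ (n / 2 + 4) := by rw [pow_add]; ring
      _ ≤ 2 ^ n := pow_le_pow_right₀ (by norm_num) (by omega)
  have hCpos : (0 : ℤ) ≤ 2 ^ (n / 2) + (c : ℤ) * 2 ^ (n / 3) := by positivity
  have hfL : (2 : ℤ) ^ n - (2 ^ (n / 2) + (c : ℤ) * 2 ^ (n / 3)) ≤ (f n : ℤ) := by
    have : (2 : ℤ) ^ n ≤ (f n : ℤ) + (2 ^ (n / 2) + (c : ℤ) * 2 ^ (n / 3)) := by
      exact_mod_cast hL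
    linarith
  have hPC : (0 : ℤ) ≤ 2 ^ n - (2 ^ (n / 2) + (c : ℤ) * 2 ^ (n / 3)) := by linarith
  have hsq : ((2 : ℤ) ^ n - (2 ^ (n / 2) + (c : ℤ) * 2 ^ (n / 3))) ^ 2 ≤ (f n : ℤ) ^ 2 :=
    pow_le_pow_left₀ hPC hfL 2
  have h1 : (f (n - 8) : ℤ) ≤ 2 ^ (n - 8) - 2 ^ ((n - 8) / 2) := by
    have : (f (n - 8) : ℤ) + 2 ^ ((n - 8) / 2) ≤ 2 ^ (n - 8) := by exact_mod_cast hU8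
    linarith
  have h2 : (f (n + 8) : ℤ) ≤ 2 ^ (n + 8) := by exact_mod_cast hUtriv
  have hf8nn : (0 : ℤ) ≤ (f (n - 8) : ℤ) := Int.natCast_nonneg _
  have hprod : (f (n - 8) : ℤ) * (f (n + 8) : ℤ)
      ≤ ((2 : ℤ) ^ (n - 8) - 2 ^ ((n - 8) / 2)) * 2 ^ (n + 8) :=
    mul_le_mul h1 h2 (Int.natCast_nonneg _) (by linarith)
  have e1a : (2 : ℤ) ^ (n - 8) * 2 ^ (n + 8) = 2 ^ n * 2 ^ n := by
    rw [← pow_add, ← pow_add]; congr 1; omega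
  have e1b : (2 : ℤ) ^ ((n - 8) / 2) * 2 ^ (n + 8) = 16 * 2 ^ (n / 2) * 2 ^ n := by
    rw [show (16 : ℤ) = 2 ^ 4 by norm_num, ← pow_add, ← pow_add, ← pow_add]
    congr 1; omega
  have hprod' : (f (n - 8) : ℤ) * (f (n + 8) : ℤ)
      ≤ 2 ^ n * 2 ^ n - 16 * 2 ^ (n / 2) * 2 ^ n := by
    calc (f (n - 8) : ℤ) * (f (n + 8) : ℤ)
        ≤ ((2 : ℤ) ^ (n - 8) - 2 ^ ((n - 8) / 2)) * 2 ^ (n + 8) := hprod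
      _ = 2 ^ n * 2 ^ n - 16 * 2 ^ (n / 2) * 2 ^ n := by rw [sub_mul, e1a, e1b]
  have hfinal : 0 < 2 ^ n * (16 * (2 : ℤ) ^ (n / 2)
      - 2 * (2 ^ (n / 2) + (c : ℤ) * 2 ^ (n / 3))) :=
    mul_pos hPpos (by linarith)
  nlinarith [sq_nonneg ((2 : ℤ) ^ (n / 2) + (c : ℤ) * 2 ^ (n / 3)), hsq, hprod', hfinal]
end

section
/- There exists a positive integer n₀ such that for every integer n ≥ n₀, g(6n)² > g(6n−2)·g(6n+2); equivalently, g(6n)/g(6n−2) > g(6n+2)/g(6n). -/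
open Finset

/-- multiples of `d` in `[1, n]` -/
private def M (d n : ℕ) : Finset ℕ := (Finset.Icc 1 n).filter (fun x => d ∣ x)

private lemma card_M (d n : ℕ) : (M d n).card = n / d := by
  rw [M, show Finset.Icc 1 n = Finset.Ioc 0 n from Finset.Icc_add_one_left_eq_Ioc 0 n]
  exact Nat.Ioc_filter_dvd_card_eq_div n d

private lemma mem_M {d n x : ℕ} : x ∈ M d n ↔ (1 ≤ x ∧ x ≤ n) ∧ d ∣ x := by
  simp [M]

private lemma cover_card_le (T : Finset (Finset ℕ)) (S : Finset ℕ) (F : ℕ → Finset ℕ)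
    (h : ∀ A ∈ T, ∃ s ∈ S, A ⊆ F s) : T.card ≤ ∑ s ∈ S, 2 ^ ((F s).card) := by
  calc T.card ≤ (S.biUnion (fun s => (F s).powerset)).card := by
        apply Finset.card_le_card
        intro A hA
        obtain ⟨s, hs, hsub⟩ := h A hA
        exact Finset.mem_biUnion.2 ⟨s, hs, Finset.mem_powerset.2 hsub⟩
    _ ≤ ∑ s ∈ S, ((F s).powerset).card := Finset.card_biUnion_le
    _ = ∑ s ∈ S, 2 ^ ((F s).card) := by simp [Finset.card_powerset]

private lemma gcd_pos_of_mem {A : Finset ℕ} {x : ℕ} (hx : x ∈ A) (hx1 : 1 ≤ x) :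
    0 < A.gcd id := by
  rcases Nat.eq_zero_or_pos (A.gcd id) with h | h
  · have h2 : A.gcd id ∣ x := Finset.gcd_dvd hx
    rw [h] at h2
    omega
  · exact h

private lemma prime_five_le {p : ℕ} (hp : p.Prime) (h2 : p ≠ 2) (h3 : p ≠ 3) : 5 ≤ p := by
  have h1 := hp.two_le
  have h4 : p ≠ 4 := by rintro rfl; norm_num at hp
  omega

/-- the set counted by `g`. -/
private def Tset (n : ℕ) : Finset (Finset ℕ) :=
  (Finset.Icc 1 n).powerset.filter
    (fun A => 1 < A.gcd id ∧ Nat.gcd (A.gcd id) (n + 1) = 1)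

private lemma g_eq (n : ℕ) : g n = (Tset n).card := rfl

private def Pset (n : ℕ) : Finset ℕ :=
  (Finset.Icc 2 n).filter (fun p => p.Prime ∧ Nat.gcd p (n + 1) = 1)

private lemma g_le_sum (n : ℕ) : g n ≤ ∑ p ∈ Pset n, 2 ^ (n / p) := by
  rw [g_eq]
  have h := cover_card_le (Tset n) (Pset n) (fun p => M p n) ?_
  · simpa [card_M] using h
  intro A hA
  rw [Tset, Finset.mem_filter, Finset.mem_powerset] at hA
  obtain ⟨hsub, hgcd, hcop⟩ := hA
  set d := A.gcd id with hd
  have hne : A.Nonempty := by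
    rcases A.eq_empty_or_nonempty with rfl | h
    · rw [Finset.gcd_empty] at hd
      omega
    · exact h
  obtain ⟨x, hx⟩ := hne
  have hxI := hsub hx
  rw [Finset.mem_Icc] at hxI
  have hdx : d ∣ x := Finset.gcd_dvd hx
  have hp : d.minFac.Prime := Nat.minFac_prime (by omega)
  have hpd : d.minFac ∣ d := Nat.minFac_dvd d
  refine ⟨d.minFac, ?_, ?_⟩
  · rw [Pset, Finset.mem_filter, Finset.mem_Icc]
    refine ⟨⟨hp.two_le, ?_⟩, hp, ?_⟩
    · exact le_trans (Nat.le_of_dvd (by omega) (hpd.trans hdx)) hxI.2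
    · exact Nat.Coprime.coprime_dvd_left hpd hcop
  · intro y hy
    have hyI := hsub hy
    rw [Finset.mem_Icc] at hyI
    exact mem_M.2 ⟨⟨hyI.1, hyI.2⟩, hpd.trans (Finset.gcd_dvd hy)⟩

private lemma sum_split (n : ℕ) :
    ∑ p ∈ Pset n, 2 ^ (n / p) ≤
      (∑ p ∈ (Pset n).filter (fun p => p < 5), 2 ^ (n / p)) + n * 2 ^ (n / 5) := by
  rw [← Finset.sum_filter_add_sum_filter_not (Pset n) (fun p => p < 5)]
  apply Nat.add_le_add_left
  calc ∑ p ∈ (Pset n).filter (fun p => ¬ p < 5), 2 ^ (n / p)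
      ≤ ∑ _p ∈ (Pset n).filter (fun p => ¬ p < 5), 2 ^ (n / 5) := by
        apply Finset.sum_le_sum
        intro p hp
        rw [Finset.mem_filter] at hp
        exact Nat.pow_le_pow_right (by norm_num)
          (Nat.div_le_div_left (by omega) (by norm_num))
    _ = ((Pset n).filter (fun p => ¬ p < 5)).card * 2 ^ (n / 5) := by
        rw [Finset.sum_const, smul_eq_mul]
    _ ≤ n * 2 ^ (n / 5) := by
        apply Nat.mul_le_mul_right
        calc ((Pset n).filter (fun p => ¬ p < 5)).card
            ≤ (Finset.Icc 2 n).card := by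
              apply Finset.card_le_card
              intro p hp
              simp only [Pset, Finset.mem_filter] at hp
              exact hp.1.1
          _ ≤ n := by rw [Nat.card_Icc]; omega

private lemma Psmall (n : ℕ) :
    (Pset n).filter (fun p => p < 5) ⊆ ({2, 3} : Finset ℕ) := by
  intro p hp
  simp only [Pset, Finset.mem_filter, Finset.mem_Icc] at hp
  obtain ⟨⟨⟨h2, _⟩, hprime, _⟩, h5⟩ := hp
  have := prime_five_le hprime
  simp only [Finset.mem_insert, Finset.mem_singleton]
  by_contra h
  push_neg at h
  have := this h.1 h.2
  omega

private lemma g_le1 (n : ℕ) : g n ≤ 2 ^ (n / 2) + 2 ^ (n / 3) + n * 2 ^ (n / 5) := by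
  refine le_trans (g_le_sum n) (le_trans (sum_split n) ?_)
  have h1 : ∑ p ∈ (Pset n).filter (fun p => p < 5), 2 ^ (n / p)
      ≤ ∑ p ∈ ({2, 3} : Finset ℕ), 2 ^ (n / p) := by
    apply Finset.sum_le_sum_of_subset (Psmall n)
  have h2 : ∑ p ∈ ({2, 3} : Finset ℕ), 2 ^ (n / p) = 2 ^ (n / 2) + 2 ^ (n / 3) := by
    rw [Finset.sum_pair (by norm_num)]
  omega

private lemma g_le2 (n : ℕ) (h3 : 3 ∣ (n + 1)) : g n ≤ 2 ^ (n / 2) + n * 2 ^ (n / 5) := by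
  refine le_trans (g_le_sum n) (le_trans (sum_split n) ?_)
  have hsub : (Pset n).filter (fun p => p < 5) ⊆ ({2} : Finset ℕ) := by
    intro p hp
    have h := Psmall n hp
    simp only [Finset.mem_insert, Finset.mem_singleton] at h ⊢
    rcases h with rfl | rfl
    · rfl
    · exfalso
      simp only [Pset, Finset.mem_filter] at hp
      have := hp.1.2.2
      have : (3 : ℕ).gcd (n+1) = 3 := Nat.gcd_eq_left h3
      omega
  have h1 : ∑ p ∈ (Pset n).filter (fun p => p < 5), 2 ^ (n / p)
      ≤ ∑ p ∈ ({2} : Finset ℕ), 2 ^ (n / p) :=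
    Finset.sum_le_sum_of_subset hsub
  simp only [Finset.sum_singleton] at h1
  omega

private lemma card_nonempty_powerset (s : Finset ℕ) :
    (s.powerset.filter (fun A => A.Nonempty)).card = 2 ^ s.card - 1 := by
  have h : s.powerset.filter (fun A => A.Nonempty) = s.powerset.erase ∅ := by
    ext A
    simp [Finset.mem_erase, Finset.nonempty_iff_ne_empty, and_comm]
  rw [h, Finset.card_erase_of_mem (Finset.empty_mem_powerset s), Finset.card_powerset]

private lemma bad_card_le (n k : ℕ) (hk : k = 2 ∨ k = 3) (h2 : ¬ 2 ∣ (n + 1))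
    (h3 : ¬ 3 ∣ (n + 1)) :
    ((M k n).powerset.filter
      (fun A => A.Nonempty ∧ ¬ Nat.gcd (A.gcd id) (n + 1) = 1)).card
      ≤ (n + 1) * 2 ^ (n / 10) := by
  set B := (M k n).powerset.filter
      (fun A => A.Nonempty ∧ ¬ Nat.gcd (A.gcd id) (n + 1) = 1) with hB
  set Q := (Finset.Icc 5 (n + 1)).filter (fun q => q ∣ (n + 1)) with hQ
  have hcover : ∀ A ∈ B, ∃ q ∈ Q, A ⊆ M (k * q) n := by
    intro A hA
    rw [hB, Finset.mem_filter, Finset.mem_powerset] at hA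
    obtain ⟨hsub, hne, hncop⟩ := hA
    obtain ⟨x, hx⟩ := hne
    have hxM := mem_M.1 (hsub hx)
    set d := A.gcd id with hd
    have hdpos : 0 < d := gcd_pos_of_mem hx hxM.1.1
    set e := Nat.gcd d (n + 1) with he
    have hepos : 0 < e := Nat.gcd_pos_of_pos_right _ (Nat.succ_pos n)
    set q := e.minFac with hqdef
    have hq : q.Prime := Nat.minFac_prime hncop
    have hqn : q ∣ n + 1 := (Nat.minFac_dvd e).trans (Nat.gcd_dvd_right _ _)
    have hqd : q ∣ d := (Nat.minFac_dvd e).trans (Nat.gcd_dvd_left _ _)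
    have hq2 : q ≠ 2 := by rintro h; rw [h] at hqn; exact h2 hqn
    have hq3 : q ≠ 3 := by rintro h; rw [h] at hqn; exact h3 hqn
    have hq5 : 5 ≤ q := prime_five_le hq hq2 hq3
    have hqle : q ≤ n + 1 := Nat.le_of_dvd (Nat.succ_pos n) hqn
    have hqk : ¬ q ∣ k := by
      intro hdvd
      have := Nat.le_of_dvd (by omega) hdvd
      omega
    have hcop : Nat.Coprime k q := Nat.coprime_comm.mp (hq.coprime_iff_not_dvd.mpr hqk)
    refine ⟨q, ?_, ?_⟩
    · rw [hQ, Finset.mem_filter, Finset.mem_Icc]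
      exact ⟨⟨hq5, hqle⟩, hqn⟩
    · intro y hy
      have hyM := mem_M.1 (hsub hy)
      have hky : k ∣ y := hyM.2
      have hqy : q ∣ y := hqd.trans (Finset.gcd_dvd hy)
      exact mem_M.2 ⟨hyM.1, hcop.mul_dvd_of_dvd_of_dvd hky hqy⟩
  calc B.card ≤ ∑ q ∈ Q, 2 ^ ((M (k * q) n).card) := cover_card_le B Q _ hcover
    _ ≤ ∑ _q ∈ Q, 2 ^ (n / 10) := by
        apply Finset.sum_le_sum
        intro q hq
        rw [hQ, Finset.mem_filter, Finset.mem_Icc] at hq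
        rw [card_M]
        apply Nat.pow_le_pow_right (by norm_num)
        apply Nat.div_le_div_left _ (by norm_num)
        have : 2 ≤ k := by omega
        calc 10 ≤ 2 * q := by omega
          _ ≤ k * q := Nat.mul_le_mul_right _ (by omega)
    _ = Q.card * 2 ^ (n / 10) := by rw [Finset.sum_const, smul_eq_mul]
    _ ≤ (n + 1) * 2 ^ (n / 10) := by
        apply Nat.mul_le_mul_right
        calc Q.card ≤ (Finset.Icc 5 (n + 1)).card := Finset.card_le_card (Finset.filter_subset _ _)
          _ ≤ n + 1 := by rw [Nat.card_Icc]; omega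

private lemma g_lower (N : ℕ) (hN : 1 ≤ N) :
    2 ^ (3 * N) + 2 ^ (2 * N) ≤
      g (6 * N) + (1 + 2 ^ N + (6 * N + 1) * 2 ^ (6 * N / 10)
        + (6 * N + 1) * 2 ^ (6 * N / 10)) := by
  have h2d : ¬ 2 ∣ (6 * N + 1) := by omega
  have h3d : ¬ 3 ∣ (6 * N + 1) := by omega
  set T₁ := (M 2 (6 * N)).powerset.filter
    (fun A => A.Nonempty ∧ Nat.gcd (A.gcd id) (6 * N + 1) = 1) with hT₁
  set T₂ := (M 3 (6 * N)).powerset.filter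
    (fun A => (∃ x ∈ A, ¬ 2 ∣ x) ∧ Nat.gcd (A.gcd id) (6 * N + 1) = 1) with hT₂
  set B₁ := (M 2 (6 * N)).powerset.filter
    (fun A => A.Nonempty ∧ ¬ Nat.gcd (A.gcd id) (6 * N + 1) = 1) with hB₁
  set B₂ := (M 3 (6 * N)).powerset.filter
    (fun A => A.Nonempty ∧ ¬ Nat.gcd (A.gcd id) (6 * N + 1) = 1) with hB₂
  -- T₁ and T₂ are disjoint subsets of the set counted by g
  have hmain : T₁.card + T₂.card ≤ g (6 * N) := by
    have hdisj : Disjoint T₁ T₂ := by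
      rw [Finset.disjoint_left]
      intro A hA1 hA2
      rw [hT₁, Finset.mem_filter, Finset.mem_powerset] at hA1
      rw [hT₂, Finset.mem_filter] at hA2
      obtain ⟨x, hx, hodd⟩ := hA2.2.1
      exact hodd (mem_M.1 (hA1.1 hx)).2
    have hsub1 : T₁ ⊆ Tset (6 * N) := by
      intro A hA
      rw [hT₁, Finset.mem_filter, Finset.mem_powerset] at hA
      obtain ⟨hsub, hne, hcop⟩ := hA
      obtain ⟨x, hx⟩ := hne
      have hxM := mem_M.1 (hsub hx)
      have hpos : 0 < A.gcd id := gcd_pos_of_mem hx hxM.1.1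
      have hdvd : 2 ∣ A.gcd id := Finset.dvd_gcd (fun b hb => (mem_M.1 (hsub hb)).2)
      rw [Tset, Finset.mem_filter, Finset.mem_powerset]
      refine ⟨fun y hy => ?_, ?_, hcop⟩
      · have := mem_M.1 (hsub hy); exact Finset.mem_Icc.2 this.1
      · have := Nat.le_of_dvd hpos hdvd; omega
    have hsub2 : T₂ ⊆ Tset (6 * N) := by
      intro A hA
      rw [hT₂, Finset.mem_filter, Finset.mem_powerset] at hA
      obtain ⟨hsub, ⟨x, hx, _⟩, hcop⟩ := hA
      have hxM := mem_M.1 (hsub hx)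
      have hpos : 0 < A.gcd id := gcd_pos_of_mem hx hxM.1.1
      have hdvd : 3 ∣ A.gcd id := Finset.dvd_gcd (fun b hb => (mem_M.1 (hsub hb)).2)
      rw [Tset, Finset.mem_filter, Finset.mem_powerset]
      refine ⟨fun y hy => ?_, ?_, hcop⟩
      · have := mem_M.1 (hsub hy); exact Finset.mem_Icc.2 this.1
      · have := Nat.le_of_dvd hpos hdvd; omega
    calc T₁.card + T₂.card = (T₁ ∪ T₂).card := (Finset.card_union_of_disjoint hdisj).symm
      _ ≤ (Tset (6 * N)).card := Finset.card_le_card (Finset.union_subset hsub1 hsub2)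
      _ = g (6 * N) := (g_eq (6 * N)).symm
  have hbad1 : B₁.card ≤ (6 * N + 1) * 2 ^ (6 * N / 10) :=
    bad_card_le (6 * N) 2 (Or.inl rfl) h2d h3d
  have hbad2 : B₂.card ≤ (6 * N + 1) * 2 ^ (6 * N / 10) :=
    bad_card_le (6 * N) 3 (Or.inr rfl) h2d h3d
  -- lower bound for T₁.card
  have h1 : 2 ^ (3 * N) ≤ T₁.card + B₁.card + 1 := by
    have hWsub : (M 2 (6 * N)).powerset.filter (fun A => A.Nonempty) ⊆ T₁ ∪ B₁ := by
      intro A hA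
      rw [Finset.mem_filter] at hA
      rw [Finset.mem_union, hT₁, hB₁, Finset.mem_filter, Finset.mem_filter]
      by_cases hc : Nat.gcd (A.gcd id) (6 * N + 1) = 1
      · exact Or.inl ⟨hA.1, hA.2, hc⟩
      · exact Or.inr ⟨hA.1, hA.2, hc⟩
    have hWcard : ((M 2 (6 * N)).powerset.filter (fun A => A.Nonempty)).card
        = 2 ^ (3 * N) - 1 := by
      rw [card_nonempty_powerset, card_M]
      congr 2
      omega
    have hle := le_trans (Finset.card_le_card hWsub) (Finset.card_union_le T₁ B₁)
    have hpow : 1 ≤ 2 ^ (3 * N) := Nat.one_le_two_pow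
    omega
  -- lower bound for T₂.card
  have h2 : 2 ^ (2 * N) ≤ T₂.card + B₂.card + 2 ^ N := by
    have hVsub : (M 3 (6 * N)).powerset ⊆ (T₂ ∪ B₂) ∪ (M 6 (6 * N)).powerset := by
      intro A hA
      rw [Finset.mem_powerset] at hA
      rw [Finset.mem_union, Finset.mem_union, hT₂, hB₂, Finset.mem_filter,
        Finset.mem_filter, Finset.mem_powerset, Finset.mem_powerset]
      by_cases hodd : ∃ x ∈ A, ¬ 2 ∣ x
      · by_cases hc : Nat.gcd (A.gcd id) (6 * N + 1) = 1
        · exact Or.inl (Or.inl ⟨hA, hodd, hc⟩)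
        · obtain ⟨x, hx, _⟩ := hodd
          exact Or.inl (Or.inr ⟨hA, ⟨x, hx⟩, hc⟩)
      · push_neg at hodd
        refine Or.inr (fun y hy => ?_)
        have h1 := mem_M.1 (hA hy)
        have h2 := hodd y hy
        exact mem_M.2 ⟨h1.1, by omega⟩
    have hVcard : (M 3 (6 * N)).powerset.card = 2 ^ (2 * N) := by
      rw [Finset.card_powerset, card_M]
      congr 1
      omega
    have h6card : (M 6 (6 * N)).powerset.card = 2 ^ N := by
      rw [Finset.card_powerset, card_M]
      congr 1
      omega
    have hle := le_trans (Finset.card_le_card hVsub)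
      (le_trans (Finset.card_union_le _ _)
        (Nat.add_le_add_right (Finset.card_union_le T₂ B₂) _))
    omega
  omega

private lemma thirteen_le (k : ℕ) (hk : 7 ≤ k) : 13 * k ≤ 2 ^ k := by
  induction k with
  | zero => omega
  | succ m ih =>
    rcases Nat.lt_or_ge m 7 with h | h
    · have hm : m = 6 := by omega
      subst hm; norm_num
    · have h1 := ih (by omega)
      have h2 : 13 ≤ 2 ^ m := le_trans (by omega) h1
      rw [pow_succ]
      omega

private lemma key_bound (m : ℕ) (hm : 100 ≤ m) : 6 * m + 2 ≤ 2 ^ (m / 2) := by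
  have h1 : 6 * m + 2 ≤ 13 * (m / 2) := by omega
  exact le_trans h1 (thirteen_le (m / 2) (by omega))

private lemma err_le (N m e : ℕ) (hN : 100 ≤ N) (hm : m ≤ 6 * N + 2)
    (he : e + N / 2 ≤ 2 * N - 5) : m * 2 ^ e ≤ 2 * (2 ^ (N - 3)) ^ 2 := by
  have h1 : m ≤ 2 ^ (N / 2) := le_trans hm (key_bound N hN)
  calc m * 2 ^ e ≤ 2 ^ (N / 2) * 2 ^ e := Nat.mul_le_mul_right _ h1
    _ = 2 ^ (N / 2 + e) := (pow_add 2 _ _).symm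
    _ ≤ 2 ^ (2 * N - 5) := Nat.pow_le_pow_right (by norm_num) (by omega)
    _ = 2 * (2 ^ (N - 3)) ^ 2 := by
        rw [← pow_mul, ← pow_succ']
        congr 1
        omega

theorem stmt_13 :
    ∃ n₀ : ℕ, 0 < n₀ ∧ ∀ n : ℕ, n₀ ≤ n →
      g (6 * n) ^ 2 > g (6 * n - 2) * g (6 * n + 2) := by
  refine ⟨100, by norm_num, fun N hN => ?_⟩
  set c := 2 ^ (N - 3) with hc
  have hcpos : 0 < c := Nat.pow_pos (by norm_num)
  -- power identities
  have e3N : 2 ^ (3 * N) = 512 * c ^ 3 := by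
    rw [hc, ← pow_mul, show 3 * N = 9 + (N - 3) * 3 by omega, pow_add]; norm_num
  have e2N : 2 ^ (2 * N) = 64 * c ^ 2 := by
    rw [hc, ← pow_mul, show 2 * N = 6 + (N - 3) * 2 by omega, pow_add]; norm_num
  have eN : 2 ^ N = 8 * c := by
    rw [hc, show N = 3 + (N - 3) by omega, pow_add]; norm_num
  have e3N1 : 2 ^ ((6 * N - 2) / 2) = 256 * c ^ 3 := by
    rw [hc, ← pow_mul, show (6 * N - 2) / 2 = 8 + (N - 3) * 3 by omega, pow_add]; norm_num
  have e2N1 : 2 ^ ((6 * N - 2) / 3) = 32 * c ^ 2 := by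
    rw [hc, ← pow_mul, show (6 * N - 2) / 3 = 5 + (N - 3) * 2 by omega, pow_add]; norm_num
  have e3Np1 : 2 ^ ((6 * N + 2) / 2) = 1024 * c ^ 3 := by
    rw [hc, ← pow_mul, show (6 * N + 2) / 2 = 10 + (N - 3) * 3 by omega, pow_add]; norm_num
  -- lower bound for g (6 N)
  have hgl := g_lower N (by omega)
  have hE1 : 1 + 2 ^ N + (6 * N + 1) * 2 ^ (6 * N / 10)
      + (6 * N + 1) * 2 ^ (6 * N / 10) ≤ 8 * c ^ 2 := by
    have h1 : (6 * N + 1) * 2 ^ (6 * N / 10) ≤ 2 * c ^ 2 :=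
      err_le N (6 * N + 1) (6 * N / 10) hN (by omega) (by omega)
    have hc10 : 1024 ≤ c := by
      rw [hc]
      calc (1024 : ℕ) = 2 ^ 10 := by norm_num
        _ ≤ 2 ^ (N - 3) := Nat.pow_le_pow_right (by norm_num) (by omega)
    have h2 : 1 + 2 ^ N ≤ 4 * c ^ 2 := by
      rw [eN]
      nlinarith [hc10]
    omega
  have hA : 512 * c ^ 3 + 56 * c ^ 2 ≤ g (6 * N) := by
    rw [e3N, e2N] at hgl
    omega
  -- upper bound for g (6 N - 2)
  have hgB := g_le1 (6 * N - 2)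
  have hE2 : (6 * N - 2) * 2 ^ ((6 * N - 2) / 5) ≤ 2 * c ^ 2 :=
    err_le N (6 * N - 2) ((6 * N - 2) / 5) hN (by omega) (by omega)
  have hB : g (6 * N - 2) ≤ 256 * c ^ 3 + 34 * c ^ 2 := by
    rw [e3N1, e2N1] at hgB
    omega
  -- upper bound for g (6 N + 2)
  have hgC := g_le2 (6 * N + 2) (by omega)
  have hE3 : (6 * N + 2) * 2 ^ ((6 * N + 2) / 5) ≤ 2 * c ^ 2 :=
    err_le N (6 * N + 2) ((6 * N + 2) / 5) hN (by omega) (by omega)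
  have hC : g (6 * N + 2) ≤ 1024 * c ^ 3 + 2 * c ^ 2 := by
    rw [e3Np1] at hgC
    omega
  -- finish
  have hA2 : (512 * c ^ 3 + 56 * c ^ 2) ^ 2 ≤ g (6 * N) ^ 2 := Nat.pow_le_pow_left hA 2
  have hBC : g (6 * N - 2) * g (6 * N + 2)
      ≤ (256 * c ^ 3 + 34 * c ^ 2) * (1024 * c ^ 3 + 2 * c ^ 2) := Nat.mul_le_mul hB hC
  have hfin : (256 * c ^ 3 + 34 * c ^ 2) * (1024 * c ^ 3 + 2 * c ^ 2)
      < (512 * c ^ 3 + 56 * c ^ 2) ^ 2 := by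
    nlinarith [pow_pos hcpos 5, pow_pos hcpos 4]
  omega
end
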